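/- arXiv:2508.05911 — 5 statements merged into one kernel-verified Lean document; each statement's English description precedes it below -/
import Mathlib

section
/- Let 𝓕 be a finite family of graphs with min_{F∈𝓕} χ(F) = r + 1 ≥ 3, and let n ≥ 1. Then every G ∈ SPEX(n, 𝓕) satisfies ρ(G) ≥ (r−1)n/r − r/(4n). -/
open SimpleGraph

/-- `F` is contained in `G` as a subgraph (there is an injective map preserving adjacency). -/
def ContainsCopy {α β : Type*} (F : SimpleGraph α) (G : SimpleGraph β) : Prop :=
  ∃ f : α ↪ β, ∀ a b, F.Adj a b → G.Adj (f a) (f b)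

/-- The join of two graphs: disjoint union plus all edges between the two parts. -/
def graphJoin {α β : Type*} (G : SimpleGraph α) (H : SimpleGraph β) :
    SimpleGraph (α ⊕ β) where
  Adj x y :=
    match x, y with
    | Sum.inl a, Sum.inl b => G.Adj a b
    | Sum.inr a, Sum.inr b => H.Adj a b
    | Sum.inl _, Sum.inr _ => True
    | Sum.inr _, Sum.inl _ => True
  symm := by
    constructor
    rintro (a | a) (b | b) h
    · exact G.adj_symm h
    · trivial
    · trivial
    · exact H.adj_symm h
  loopless := by
    constructor
    rintro (a | a) h
    · exact G.irrefl h
    · exact H.irrefl h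

/-- The fan `H_ℓ = K_1 ∨ P_ℓ`. -/
def fan (ℓ : ℕ) : SimpleGraph (Fin 1 ⊕ Fin ℓ) :=
  graphJoin (⊤ : SimpleGraph (Fin 1)) (pathGraph ℓ)

/-- The degree of a vertex. -/
noncomputable def gdeg {V : Type*} (G : SimpleGraph V) (v : V) : ℕ :=
  (G.neighborSet v).ncard

/-- `G` is `k`-regular. -/
def IsKRegular {V : Type*} (G : SimpleGraph V) (k : ℕ) : Prop :=
  ∀ v, gdeg G v = k

/-- `G` is nearly `k`-regular: all degrees are `k` except one vertex of degree `k-1`. -/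
def IsNearlyKRegular {V : Type*} (G : SimpleGraph V) (k : ℕ) : Prop :=
  ∃ u, gdeg G u = k - 1 ∧ ∀ v, v ≠ u → gdeg G v = k

/-- The adjacency matrix of `G` over `ℝ`. -/
noncomputable def adjMat {V : Type*} (G : SimpleGraph V) : Matrix V V ℝ :=
  letI := Classical.decRel G.Adj
  G.adjMatrix ℝ

/-- The spectral radius of a graph: the largest eigenvalue of its adjacency matrix. -/
noncomputable def specRad {V : Type*} [Fintype V] (G : SimpleGraph V) : ℝ :=
  sSup {μ : ℝ | Module.End.HasEigenvalue (adjMat G).mulVecLin μ}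

/-- `SPEX n F`: the `F`-free graphs on `n` vertices of maximum spectral radius. -/
def SPEX (n : ℕ) {α : Type*} (F : SimpleGraph α) : Set (SimpleGraph (Fin n)) :=
  {G | ¬ ContainsCopy F G ∧
    ∀ H : SimpleGraph (Fin n), ¬ ContainsCopy F H → specRad H ≤ specRad G}

/-- `SPEXfam n m F`: the `𝓕`-free graphs on `n` vertices of maximum spectral radius,
for a family `𝓕 = {F i}` of graphs. -/
def SPEXfam (n : ℕ) {ι : Type*} (m : ι → ℕ) (F : ∀ i, SimpleGraph (Fin (m i))) :
    Set (SimpleGraph (Fin n)) :=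
  {G | (∀ i, ¬ ContainsCopy (F i) G) ∧
    ∀ H : SimpleGraph (Fin n), (∀ i, ¬ ContainsCopy (F i) H) → specRad H ≤ specRad G}


section Aux

open Finset

/-- Matrix as a linear endomorphism of Euclidean space. -/
noncomputable def matEuc (n : ℕ) (A : Matrix (Fin n) (Fin n) ℝ) :
    EuclideanSpace ℝ (Fin n) →ₗ[ℝ] EuclideanSpace ℝ (Fin n) where
  toFun x := WithLp.toLp 2 (A.mulVec x)
  map_add' x y := by simp [Matrix.mulVec_add]
  map_smul' c x := by simp [Matrix.mulVec_smul]

lemma eig_bddAbove (n : ℕ) (A : Matrix (Fin n) (Fin n) ℝ) :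
    BddAbove {μ : ℝ | Module.End.HasEigenvalue A.mulVecLin μ} := by
  refine ⟨‖LinearMap.toContinuousLinearMap A.mulVecLin‖, fun μ hμ => ?_⟩
  obtain ⟨x, hx⟩ := Module.End.HasEigenvalue.exists_hasEigenvector hμ
  have hxne : x ≠ 0 := hx.2
  have hEq : A.mulVecLin x = μ • x := Module.End.mem_eigenspace_iff.mp hx.1
  have h1 : ‖μ • x‖ ≤ ‖LinearMap.toContinuousLinearMap A.mulVecLin‖ * ‖x‖ := by
    rw [← hEq]
    exact (LinearMap.toContinuousLinearMap A.mulVecLin).le_opNorm x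
  rw [norm_smul] at h1
  have hxpos : 0 < ‖x‖ := norm_pos_iff.mpr hxne
  have h2 := (mul_le_mul_iff_of_pos_right hxpos).mp h1
  calc μ ≤ |μ| := le_abs_self μ
    _ = ‖μ‖ := rfl
    _ ≤ _ := h2

lemma rayleigh_ones (n : ℕ) (hn : 1 ≤ n) (G : SimpleGraph (Fin n)) :
    (∑ u : Fin n, ∑ v : Fin n, adjMat G u v) / n ≤ specRad G := by
  classical
  set A := adjMat G with hA
  have hAsymm : A.IsSymm := by
    rw [hA, adjMat]
    exact SimpleGraph.isSymm_adjMatrix G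
  set T := matEuc n A with hT
  have hTsym : T.IsSymmetric := by
    intro x y
    simp only [hT, matEuc, LinearMap.coe_mk, AddHom.coe_mk, PiLp.inner_apply, RCLike.inner_apply,
      conj_trivial, Matrix.mulVec, dotProduct, Finset.sum_mul, Finset.mul_sum]
    rw [Finset.sum_comm]
    apply Finset.sum_congr rfl; intro i _; apply Finset.sum_congr rfl; intro j _
    rw [← hAsymm.apply i j]; ring
  haveI : Nontrivial (EuclideanSpace ℝ (Fin n)) := by
    refine nontrivial_of_ne (EuclideanSpace.single ⟨0, hn⟩ 1) 0 ?_
    intro h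
    have := congrArg (fun v : EuclideanSpace ℝ (Fin n) => v ⟨0, hn⟩) h
    simp [EuclideanSpace.single] at this
  have heig := hTsym.hasEigenvalue_iSup_of_finiteDimensional
  set μ : ℝ := ⨆ x : { x : EuclideanSpace ℝ (Fin n) // x ≠ 0 },
      RCLike.re (inner ℝ (T x) (x : EuclideanSpace ℝ (Fin n)) : ℝ) /
        ‖(x : EuclideanSpace ℝ (Fin n))‖ ^ 2 with hμ
  have hμeig : Module.End.HasEigenvalue A.mulVecLin μ := by
    obtain ⟨x, hx⟩ := Module.End.HasEigenvalue.exists_hasEigenvector heig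
    have hEq : T x = μ • x := Module.End.mem_eigenspace_iff.mp hx.1
    refine Module.End.hasEigenvalue_of_hasEigenvector (x := (x : Fin n → ℝ)) ?_
    refine Module.End.hasEigenvector_iff.mpr ⟨Module.End.mem_eigenspace_iff.mpr ?_,
      fun h => hx.2 (by simpa using congrArg (WithLp.toLp 2) h)⟩
    simpa [hT, matEuc] using congrArg WithLp.ofLp hEq
  have hμle : μ ≤ specRad G := le_csSup (eig_bddAbove n A) hμeig
  refine le_trans ?_ hμle
  set x₀ : EuclideanSpace ℝ (Fin n) := WithLp.toLp 2 (fun _ => (1:ℝ)) with hx₀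
  have hx₀ne : x₀ ≠ 0 := by
    intro h
    have := congrArg (fun v : EuclideanSpace ℝ (Fin n) => v ⟨0, hn⟩) h
    simp [hx₀] at this
  have hbdd : BddAbove (Set.range fun x : { x : EuclideanSpace ℝ (Fin n) // x ≠ 0 } =>
      RCLike.re (inner ℝ (T x) (x : EuclideanSpace ℝ (Fin n)) : ℝ) /
        ‖(x : EuclideanSpace ℝ (Fin n))‖ ^ 2) := by
    refine ⟨‖LinearMap.toContinuousLinearMap T‖, ?_⟩
    rintro y ⟨⟨x, hx⟩, rfl⟩
    have hxpos : 0 < ‖x‖ := norm_pos_iff.mpr hx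
    rw [div_le_iff₀ (by positivity)]
    calc RCLike.re (inner ℝ (T x) x : ℝ) ≤ ‖(inner ℝ (T x) x : ℝ)‖ := RCLike.re_le_norm _
      _ ≤ ‖T x‖ * ‖x‖ := norm_inner_le_norm _ _
      _ ≤ (‖LinearMap.toContinuousLinearMap T‖ * ‖x‖) * ‖x‖ := by
          gcongr
          exact (LinearMap.toContinuousLinearMap T).le_opNorm x
      _ = ‖LinearMap.toContinuousLinearMap T‖ * ‖x‖ ^ 2 := by ring
  have hval := le_ciSup hbdd (⟨x₀, hx₀ne⟩ : { x : EuclideanSpace ℝ (Fin n) // x ≠ 0 })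
  rw [hμ]
  refine le_trans ?_ hval
  have hnorm : ‖x₀‖ ^ 2 = (n : ℝ) := by
    rw [EuclideanSpace.norm_eq, Real.sq_sqrt (by positivity)]
    simp [hx₀]
  have hinner : RCLike.re (inner ℝ (T x₀) (x₀ : EuclideanSpace ℝ (Fin n)) : ℝ)
      = ∑ u : Fin n, ∑ v : Fin n, A u v := by
    simp only [hT, matEuc, LinearMap.coe_mk, AddHom.coe_mk, PiLp.inner_apply, RCLike.inner_apply,
      conj_trivial, Matrix.mulVec, dotProduct, hx₀, mul_one, RCLike.re_to_real, one_mul]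
  rw [hinner, hnorm]

lemma residue_count (n r i : ℕ) (hr : 0 < r) (hi : i < r) :
    #((Finset.range n).filter (fun v => v % r = i)) = n / r + if i < n % r then 1 else 0 := by
  have h := Nat.count_modEq_card n hr i
  rw [Nat.count_eq_card_filter_range] at h
  rw [Nat.mod_eq_of_lt hi] at h
  rw [← h]
  apply congrArg
  apply Finset.filter_congr
  intro x _
  simp [Nat.ModEq, Nat.mod_eq_of_lt hi]

lemma sum_ite_lt (r s : ℕ) (hs : s ≤ r) :
    ∑ i ∈ Finset.range r, (if i < s then 1 else 0) = s := by
  rw [← Finset.card_filter]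
  have : (Finset.range r).filter (fun i => i < s) = Finset.range s := by
    ext x; simp; omega
  rw [this, Finset.card_range]

lemma sum_sq_residues (n r : ℕ) (hr : 0 < r) :
    ∑ i ∈ Finset.range r, (#((Finset.range n).filter (fun v => v % r = i)))^2
      = r * (n/r)^2 + 2 * (n/r) * (n % r) + n % r := by
  have key : ∀ i ∈ Finset.range r,
      (#((Finset.range n).filter (fun v => v % r = i)))^2
        = (n/r)^2 + (2*(n/r)+1) * (if i < n % r then 1 else 0) := by
    intro i hi
    rw [residue_count n r i hr (Finset.mem_range.mp hi)]
    rcases lt_or_ge i (n % r) with h | h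
    · simp [h]; ring
    · simp [Nat.not_lt.mpr h]
  rw [Finset.sum_congr rfl key, Finset.sum_add_distrib, Finset.sum_const, ← Finset.mul_sum,
    sum_ite_lt r (n % r) (Nat.mod_lt n hr).le]
  simp [Finset.card_range]
  ring

lemma pair_count (n r : ℕ) (hr : 0 < r) :
    ∑ u ∈ Finset.range n, ∑ v ∈ Finset.range n, (if u % r = v % r then 1 else 0)
      = r * (n/r)^2 + 2 * (n/r) * (n % r) + n % r := by
  rw [← sum_sq_residues n r hr]
  rw [← Finset.sum_fiberwise_of_maps_to (g := fun u => u % r)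
    (fun u _ => Finset.mem_range.mpr (Nat.mod_lt u hr))
    (fun u => ∑ v ∈ Finset.range n, (if u % r = v % r then 1 else 0))]
  apply Finset.sum_congr rfl
  intro i _
  have : ∀ u ∈ (Finset.range n).filter (fun u => u % r = i),
      (∑ v ∈ Finset.range n, if u % r = v % r then 1 else 0)
        = #((Finset.range n).filter (fun v => v % r = i)) := by
    intro u hu
    have hui : u % r = i := (Finset.mem_filter.mp hu).2
    rw [← Finset.card_filter]
    apply congrArg
    apply Finset.filter_congr
    intro x _
    simp [hui, eq_comm]
  rw [Finset.sum_congr rfl this, Finset.sum_const, smul_eq_mul, sq]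

lemma turan_sum (n r : ℕ) :
    ∑ u : Fin n, ∑ v : Fin n, adjMat (SimpleGraph.turanGraph n r) u v
      = (n:ℝ)^2 - ((∑ u ∈ Finset.range n, ∑ v ∈ Finset.range n,
          (if u % r = v % r then 1 else 0) : ℕ) : ℝ) := by
  classical
  have hentry : ∀ u v : Fin n, adjMat (SimpleGraph.turanGraph n r) u v
      = 1 - (if (u:ℕ) % r = (v:ℕ) % r then (1:ℝ) else 0) := by
    intro u v
    rw [adjMat, SimpleGraph.adjMatrix_apply]
    by_cases h : (u:ℕ) % r = (v:ℕ) % r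
    · simp [h, SimpleGraph.turanGraph]
    · simp [h, SimpleGraph.turanGraph]
  push_cast
  simp only [hentry, Finset.sum_sub_distrib]
  have h1 : (∑ _x : Fin n, ∑ _y : Fin n, (1:ℝ)) = (n:ℝ)^2 := by
    simp [sq]
  rw [h1]
  congr 1
  rw [Fin.sum_univ_eq_sum_range (fun u => ∑ x : Fin n, if u % r = (x:ℕ) % r then (1:ℝ) else 0)]
  apply Finset.sum_congr rfl
  intro u _
  rw [Fin.sum_univ_eq_sum_range (fun v => if u % r = v % r then (1:ℝ) else 0)]

lemma turan_colorable (n r : ℕ) (hr : 0 < r) : (SimpleGraph.turanGraph n r).Colorable r :=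
  ⟨SimpleGraph.Coloring.mk (fun v => ⟨(v:ℕ) % r, Nat.mod_lt _ hr⟩)
    (fun hadj heq => hadj (by simpa using congrArg Fin.val heq))⟩

end Aux

/-- every spectral extremal `𝓕`-free graph on `n ≥ 1` vertices satisfies
`ρ(G) ≥ (r-1)n/r - r/(4n)`. -/
theorem spex_spectral_lower_bound
    (r : ℕ) (hr : 2 ≤ r)
    (ι : Type) [Fintype ι] [Nonempty ι] (m : ι → ℕ)
    (F : ∀ i, SimpleGraph (Fin (m i)))
    -- `min_{F ∈ 𝓕} χ(F) = r + 1`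
    (hchrom_ge : ∀ i, ((r : ℕ∞) + 1) ≤ (F i).chromaticNumber)
    (hchrom_eq : ∃ i, (F i).chromaticNumber = ((r : ℕ∞) + 1))
    (n : ℕ) (hn : 1 ≤ n) :
    ∀ G ∈ SPEXfam n m F,
      ((r : ℝ) - 1) * n / r - r / (4 * n) ≤ specRad G := by
  intro G hG
  have hr0 : 0 < r := by omega
  -- the Turán graph is 𝓕-free
  have hfree : ∀ i, ¬ ContainsCopy (F i) (SimpleGraph.turanGraph n r) := by
    intro i hcopy
    obtain ⟨f, hf⟩ := hcopy
    obtain ⟨C⟩ := turan_colorable n r hr0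
    have hcol : (F i).Colorable r := ⟨C.comp ⟨f, fun h => hf _ _ h⟩⟩
    have hle : (F i).chromaticNumber ≤ (r : ℕ∞) := hcol.chromaticNumber_le
    have habs : ((r : ℕ∞) + 1) ≤ (r : ℕ∞) := le_trans (hchrom_ge i) hle
    have habs' : ((r + 1 : ℕ) : ℕ∞) ≤ ((r : ℕ) : ℕ∞) := by push_cast; exact habs
    exact absurd (Nat.cast_le.mp habs') (by omega)
  have hGle : specRad (SimpleGraph.turanGraph n r) ≤ specRad G := hG.2 _ hfree
  refine le_trans ?_ hGle
  refine le_trans ?_ (rayleigh_ones n hn (SimpleGraph.turanGraph n r))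
  rw [turan_sum n r, pair_count n r hr0]
  -- final arithmetic
  set q : ℕ := n / r with hq
  set s : ℕ := n % r with hs
  have hnqs : r * q + s = n := Nat.div_add_mod n r
  have hslt : s < r := Nat.mod_lt n hr0
  have hm : (n : ℝ) = (r : ℝ) * q + s := by exact_mod_cast hnqs.symm
  have hS : ((s:ℝ)) < (r:ℝ) := by exact_mod_cast hslt
  have hr2 : (2:ℝ) ≤ (r:ℝ) := by exact_mod_cast hr
  have hn1 : (1:ℝ) ≤ (n:ℝ) := by exact_mod_cast hn
  have hQ0 : (0:ℝ) ≤ (q:ℝ) := by positivity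
  have hS0 : (0:ℝ) ≤ (s:ℝ) := by positivity
  have hNcast : ((r * q^2 + 2 * q * s + s : ℕ) : ℝ)
      = (r:ℝ) * q^2 + 2 * q * s + s := by push_cast; ring
  rw [hNcast]
  have hrpos : (0:ℝ) < (r:ℝ) := by linarith
  have hnpos : (0:ℝ) < (n:ℝ) := by linarith
  have key : ((r:ℝ) * q^2 + 2 * q * s + s) * r ≤ (n:ℝ)^2 + (r:ℝ)^2/4 := by
    rw [hm]
    nlinarith [sq_nonneg ((r:ℝ) - 2*s)]
  rw [div_sub_div _ _ (ne_of_gt hrpos) (by positivity : (4:ℝ)*n ≠ 0),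
    div_le_div_iff₀ (by positivity) hnpos]
  nlinarith [mul_le_mul_of_nonneg_right key hnpos.le]
end

section
/- Let k ≥ 3 be odd and let n ≡ 2 (mod 4) be sufficiently large. Let G be a graph on n vertices whose vertex set admits a partition into parts L and R with |L| = |R| = n/2 such that every vertex of L is adjacent to every vertex of R, R is an independent set, and the induced subgraph G[L] is a nearly k-regular P_{2k+3}-free graph. Then ρ(G) < (k + √(k² + n² − 4))/2. -/
open SimpleGraph
open Matrix

lemma adjMat_apply' {V : Type*} (G : SimpleGraph V) (i j : V) [Decidable (G.Adj i j)] :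
    adjMat G i j = if G.Adj i j then 1 else 0 := by
  unfold adjMat
  rw [SimpleGraph.adjMatrix_apply]
  congr 1

lemma adjMat_nonneg' {V : Type*} (G : SimpleGraph V) (i j : V) : 0 ≤ adjMat G i j := by
  classical
  rw [adjMat_apply']
  split <;> norm_num

lemma gdeg_induce {n : ℕ} (G : SimpleGraph (Fin n)) [DecidableRel G.Adj] (L : Finset (Fin n))
    (z : Fin n) (hz : z ∈ L) :
    gdeg (G.induce (L : Set (Fin n))) ⟨z, hz⟩ = (L.filter (fun j => G.Adj z j)).card := by
  classical
  have himg : Subtype.val '' ((G.induce (L : Set (Fin n))).neighborSet ⟨z, hz⟩) =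
      ↑(L.filter (fun j => G.Adj z j)) := by
    ext j
    constructor
    · rintro ⟨⟨j', hj'⟩, hadj, rfl⟩
      exact Finset.mem_coe.2 (Finset.mem_filter.2 ⟨hj', hadj⟩)
    · intro hj
      obtain ⟨hjL, hadj⟩ := Finset.mem_filter.1 (Finset.mem_coe.1 hj)
      exact ⟨⟨j, hjL⟩, hadj, rfl⟩
  unfold gdeg
  rw [← Set.ncard_image_of_injective _ Subtype.val_injective, himg, Set.ncard_coe_finset]

lemma adjMat_isHermitian' {V : Type*} [Fintype V] (G : SimpleGraph V) :
    (adjMat G).IsHermitian := by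
  classical
  ext i j
  simp only [Matrix.conjTranspose_apply, adjMat_apply', star_trivial]
  rw [G.adj_comm]

lemma exists_perron {n : ℕ} (hn : 0 < n) (G : SimpleGraph (Fin n)) :
    ∃ y : Fin n → ℝ, y ≠ 0 ∧ (∀ i, 0 ≤ y i) ∧ adjMat G *ᵥ y = specRad G • y := by
  classical
  set A := adjMat G with hAdef
  have hA : A.IsHermitian := adjMat_isHermitian' G
  have hne : (Finset.univ : Finset (Fin n)).Nonempty := ⟨⟨0, hn⟩, Finset.mem_univ _⟩
  obtain ⟨i₀, -, hi₀⟩ := Finset.exists_max_image Finset.univ hA.eigenvalues hne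
  set μ := hA.eigenvalues i₀ with hμdef
  have hU := (Matrix.mem_unitaryGroup_iff).mp (hA.eigenvectorUnitary).2
  have hdec : μ • (1 : Matrix (Fin n) (Fin n) ℝ) - A =
      (hA.eigenvectorUnitary : Matrix (Fin n) (Fin n) ℝ) *
        Matrix.diagonal (fun i => μ - hA.eigenvalues i) *
        (hA.eigenvectorUnitary : Matrix (Fin n) (Fin n) ℝ)ᴴ := by
    have hdiag : Matrix.diagonal (fun i => μ - hA.eigenvalues i) =
        μ • (1 : Matrix (Fin n) (Fin n) ℝ) -
          Matrix.diagonal (RCLike.ofReal ∘ hA.eigenvalues) := by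
      rw [Matrix.smul_one_eq_diagonal, ← Matrix.diagonal_sub]
      rfl
    rw [hdiag, Matrix.mul_sub, Matrix.sub_mul, Matrix.mul_smul, Matrix.mul_one,
      Matrix.smul_mul]
    rw [← Matrix.star_eq_conjTranspose, hU]
    congr 1
    exact hA.spectral_theorem
  have hPSD : (μ • (1 : Matrix (Fin n) (Fin n) ℝ) - A).PosSemidef := by
    rw [hdec]
    exact (Matrix.posSemidef_diagonal_iff.mpr
      (fun i => sub_nonneg.2 (hi₀ i (Finset.mem_univ i)))).mul_mul_conjTranspose_same _
  have hquad : ∀ z : Fin n → ℝ, z ⬝ᵥ (A *ᵥ z) ≤ μ * (z ⬝ᵥ z) := by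
    intro z
    have h0 := hPSD.dotProduct_mulVec_nonneg z
    simp only [star_trivial, Matrix.sub_mulVec, Matrix.smul_mulVec, Matrix.one_mulVec,
      dotProduct_sub, dotProduct_smul, smul_eq_mul] at h0
    linarith
  set x : Fin n → ℝ := ⇑(hA.eigenvectorBasis i₀) with hxdef
  have hAx : A *ᵥ x = μ • x := hA.mulVec_eigenvectorBasis i₀
  have hx0 : x ≠ 0 := by
    intro h
    exact hA.eigenvectorBasis.orthonormal.ne_zero i₀ (by ext i; exact congrFun h i)
  have hμmem : Module.End.HasEigenvalue (A.mulVecLin) μ := by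
    apply Module.End.hasEigenvalue_of_hasEigenvector (x := x)
    refine ⟨Module.End.mem_eigenspace_iff.2 ?_, hx0⟩
    simpa [Matrix.mulVecLin_apply] using hAx
  have hub : ∀ ν ∈ {μ : ℝ | Module.End.HasEigenvalue (adjMat G).mulVecLin μ}, ν ≤ μ := by
    intro ν hν
    obtain ⟨v, hv⟩ := hν.exists_hasEigenvector
    have hv1 : A *ᵥ v = ν • v := by
      have := hv.apply_eq_smul
      simpa [Matrix.mulVecLin_apply] using this
    have hvv : 0 < v ⬝ᵥ v := by
      rcases (dotProduct_self_eq_zero (v := v)).ne.mpr hv.2 with h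
      have h2 : 0 ≤ v ⬝ᵥ v := Finset.sum_nonneg fun i _ => mul_self_nonneg _
      exact lt_of_le_of_ne h2 (Ne.symm h)
    have := hquad v
    rw [hv1, dotProduct_smul, smul_eq_mul] at this
    exact le_of_mul_le_mul_right (by linarith) hvv
  have hspec : specRad G = μ := by
    apply le_antisymm
    · exact csSup_le ⟨μ, hμmem⟩ hub
    · exact le_csSup ⟨μ, hub⟩ hμmem
  set y : Fin n → ℝ := fun i => |x i| with hydef
  have hyy : y ⬝ᵥ y = x ⬝ᵥ x := by
    simp [dotProduct, hydef, abs_mul_abs_self]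
  have hxAx : x ⬝ᵥ (A *ᵥ x) = μ * (x ⬝ᵥ x) := by
    rw [hAx, dotProduct_smul, smul_eq_mul]
  have hcmp : x ⬝ᵥ (A *ᵥ x) ≤ y ⬝ᵥ (A *ᵥ y) := by
    simp only [dotProduct, Matrix.mulVec, dotProduct]
    refine Finset.sum_le_sum fun i _ => ?_
    calc x i * ∑ j, A i j * x j ≤ |x i * ∑ j, A i j * x j| := le_abs_self _
      _ = |x i| * |∑ j, A i j * x j| := abs_mul _ _
      _ ≤ |x i| * ∑ j, |A i j * x j| :=
          mul_le_mul_of_nonneg_left (Finset.abs_sum_le_sum_abs _ _) (abs_nonneg _)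
      _ = y i * ∑ j, A i j * y j := by
          congr 1
          refine Finset.sum_congr rfl fun j _ => ?_
          rw [abs_mul, abs_of_nonneg (adjMat_nonneg' G i j)]
  have hyAy : y ⬝ᵥ ((μ • (1 : Matrix (Fin n) (Fin n) ℝ) - A) *ᵥ y) = 0 := by
    have h1 := hquad y
    have h2 : μ * (y ⬝ᵥ y) ≤ y ⬝ᵥ (A *ᵥ y) := by
      rw [hyy]; linarith [hcmp, hxAx]
    simp only [Matrix.sub_mulVec, Matrix.smul_mulVec, Matrix.one_mulVec,
      dotProduct_sub, dotProduct_smul, smul_eq_mul]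
    linarith
  have hMy : (μ • (1 : Matrix (Fin n) (Fin n) ℝ) - A) *ᵥ y = 0 := by
    rw [← hPSD.dotProduct_mulVec_zero_iff y]
    simpa using hyAy
  have hAy : A *ᵥ y = μ • y := by
    have := hMy
    rw [Matrix.sub_mulVec, Matrix.smul_mulVec, Matrix.one_mulVec, sub_eq_zero] at this
    exact this.symm
  refine ⟨y, ?_, fun i => abs_nonneg _, by rw [hspec]; exact hAy⟩
  intro h
  apply hx0
  ext i
  have := congrFun h i
  simpa [hydef, abs_eq_zero] using this
set_option maxHeartbeats 1000000 in
/-- for odd `k ≥ 3` and sufficiently large `n ≡ 2 (mod 4)`, any graph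
obtained from the complete bipartite graph with parts of size `n/2` by embedding a
nearly `k`-regular `P_{2k+3}`-free graph into one part has spectral radius strictly
less than `(k + √(k² + n² - 4))/2`. -/
theorem spectral_upper_bound_nearly_regular (k : ℕ) (hko : Odd k) (hk : 3 ≤ k) :
    ∃ n₀ : ℕ, ∀ n : ℕ, n₀ ≤ n → n % 4 = 2 →
      ∀ G : SimpleGraph (Fin n), ∀ L R : Finset (Fin n),
        Disjoint L R → L ∪ R = Finset.univ →
        L.card = n / 2 → R.card = n / 2 →
        (∀ u ∈ L, ∀ v ∈ R, G.Adj u v) →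
        (∀ u ∈ R, ∀ v ∈ R, ¬ G.Adj u v) →
        IsNearlyKRegular (G.induce (L : Set (Fin n))) k →
        ¬ ContainsCopy (pathGraph (2 * k + 3)) (G.induce (L : Set (Fin n))) →
        specRad G < ((k : ℝ) + Real.sqrt ((k : ℝ) ^ 2 + (n : ℝ) ^ 2 - 4)) / 2 := by
  classical
  refine ⟨4 * (k * k) + 10, fun n hn hn4 G L R hdisj hunion hLcard hRcard hLR hRR hnear _ => ?_⟩
  have hn2 : n = 2 * (n / 2) := by omega
  set m := n / 2 with hmdef
  have hmk : 2 * (k * k) + 5 ≤ m := by omega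
  -- real number facts
  have hkR : (3 : ℝ) ≤ (k : ℝ) := by exact_mod_cast hk
  have hmR : (n : ℝ) = 2 * (m : ℝ) := by exact_mod_cast hn2
  have hmkR : 2 * ((k : ℝ) * (k : ℝ)) + 5 ≤ (m : ℝ) := by exact_mod_cast hmk
  set μ := specRad G with hμdef
  set s := Real.sqrt ((k : ℝ) ^ 2 + (n : ℝ) ^ 2 - 4) with hsdef
  by_contra hcon
  push_neg at hcon
  have hs0 : 0 ≤ s := Real.sqrt_nonneg _
  have hs2 : s ^ 2 = (k : ℝ) ^ 2 + (n : ℝ) ^ 2 - 4 := by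
    rw [hsdef]
    apply Real.sq_sqrt
    nlinarith
  clear_value s
  have hsn : (n : ℝ) ≤ s := by
    by_contra h
    push_neg at h
    have := mul_self_lt_mul_self (by positivity) h
    nlinarith
  have hμm : (m : ℝ) + (k : ℝ) / 2 ≤ μ := by
    have h : ((k : ℝ) + s) / 2 ≤ μ := hcon
    linarith
  have hμpos : 0 < μ := by linarith [Nat.cast_nonneg (α := ℝ) m]
  -- the nonnegative eigenvector
  obtain ⟨y, hy0, hynn, hAy⟩ := exists_perron (by omega) G
  have hAy' : ∀ i, (adjMat G *ᵥ y) i = μ * y i := by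
    intro i
    rw [hAy, ← hμdef]
    simp
  clear_value μ
  -- adjacency entries
  have hA1 : ∀ i j, G.Adj i j → adjMat G i j = 1 := by
    intro i j h
    rw [adjMat_apply']
    simp [h]
  have hA0 : ∀ i j, ¬G.Adj i j → adjMat G i j = 0 := by
    intro i j h
    rw [adjMat_apply']
    simp [h]
  have hmemLR : ∀ i : Fin n, i ∈ L ∨ i ∈ R := by
    intro i
    have : i ∈ L ∪ R := by rw [hunion]; exact Finset.mem_univ i
    exact Finset.mem_union.1 this
  set SL := ∑ j ∈ L, y j with hSLdef
  set SR := ∑ j ∈ R, y j with hSRdef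
  have hsplit : ∀ i, (adjMat G *ᵥ y) i =
      ∑ j ∈ L, adjMat G i j * y j + ∑ j ∈ R, adjMat G i j * y j := by
    intro i
    simp only [Matrix.mulVec, dotProduct]
    rw [← Finset.sum_union hdisj, hunion]
  -- eigen-equations on R and L
  have hv : ∀ v ∈ R, μ * y v = SL := by
    intro v hv
    have h1 : μ * y v = ∑ j ∈ L, adjMat G v j * y j + ∑ j ∈ R, adjMat G v j * y j := by
      rw [← hAy' v, hsplit v]
    have h2 : ∑ j ∈ L, adjMat G v j * y j = SL := by
      rw [hSLdef]
      refine Finset.sum_congr rfl fun j hj => ?_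
      rw [hA1 v j ((hLR j hj v hv).symm), one_mul]
    have h3 : ∑ j ∈ R, adjMat G v j * y j = 0 := by
      refine Finset.sum_eq_zero fun j hj => ?_
      rw [hA0 v j (hRR v hv j hj), zero_mul]
    rw [h1, h2, h3, add_zero]
  have hw : ∀ w ∈ L, μ * y w = (∑ j ∈ L, adjMat G w j * y j) + SR := by
    intro w hw
    have h1 : μ * y w = ∑ j ∈ L, adjMat G w j * y j + ∑ j ∈ R, adjMat G w j * y j := by
      rw [← hAy' w, hsplit w]
    have h3 : ∑ j ∈ R, adjMat G w j * y j = SR := by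
      rw [hSRdef]
      refine Finset.sum_congr rfl fun j hj => ?_
      rw [hA1 w j (hLR w hw j hj), one_mul]
    rw [h1, h3]
  have hTnn : ∀ w, (0:ℝ) ≤ ∑ j ∈ L, adjMat G w j * y j :=
    fun w => Finset.sum_nonneg fun j _ => mul_nonneg (adjMat_nonneg' G w j) (hynn j)
  have hSRnn : 0 ≤ SR := Finset.sum_nonneg fun j _ => hynn j
  have hSLnn : 0 ≤ SL := Finset.sum_nonneg fun j _ => hynn j
  -- sums of the eigen-equations
  have hRsum : μ * SR = (m : ℝ) * SL := by
    rw [hSRdef, Finset.mul_sum, Finset.sum_congr rfl hv, Finset.sum_const, hRcard,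
      nsmul_eq_mul]
  -- degree counts
  obtain ⟨u₀, hu₀, hrest⟩ := hnear
  set w₀ : Fin n := (u₀ : Fin n) with hw₀def
  have hw₀L : w₀ ∈ L := Finset.mem_coe.1 u₀.2
  have hc₀ : (L.filter (fun j => G.Adj w₀ j)).card = k - 1 := by
    have h := gdeg_induce G L w₀ hw₀L
    rw [show (⟨w₀, hw₀L⟩ : (L : Set (Fin n))) = u₀ from Subtype.ext rfl] at h
    rw [← h, hu₀]
  have hc : ∀ z ∈ L, z ≠ w₀ → (L.filter (fun j => G.Adj z j)).card = k := by
    intro z hz hzw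
    have h := gdeg_induce G L z hz
    rw [← h]
    exact hrest ⟨z, hz⟩ (fun h => hzw (congrArg Subtype.val h))
  -- row sums of the adjacency matrix over L
  have hrow : ∀ z, ∑ j ∈ L, adjMat G z j = ((L.filter (fun j => G.Adj z j)).card : ℝ) := by
    intro z
    rw [Finset.sum_congr rfl (fun j _ => adjMat_apply' G z j), Finset.sum_boole]
  have hcol : ∀ j, ∑ w ∈ L, adjMat G w j = ((L.filter (fun i => G.Adj j i)).card : ℝ) := by
    intro j
    rw [← hrow j]
    refine Finset.sum_congr rfl fun w _ => ?_
    rw [adjMat_apply', adjMat_apply', G.adj_comm]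
  have hkm1 : ((k - 1 : ℕ) : ℝ) = (k : ℝ) - 1 := by
    have h1 : 1 ≤ k := by omega
    rw [Nat.cast_sub h1, Nat.cast_one]
  have hTsum : ∑ w ∈ L, (∑ j ∈ L, adjMat G w j * y j) = (k : ℝ) * SL - y w₀ := by
    have h1 : ∑ w ∈ L, (∑ j ∈ L, adjMat G w j * y j)
        = ∑ j ∈ L, ((L.filter (fun i => G.Adj j i)).card : ℝ) * y j := by
      rw [Finset.sum_comm]
      refine Finset.sum_congr rfl fun j _ => ?_
      rw [← Finset.sum_mul, hcol j]
    have h2 : ∑ j ∈ L, ((k : ℝ) * y j - ((L.filter (fun i => G.Adj j i)).card : ℝ) * y j)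
        = y w₀ := by
      rw [Finset.sum_eq_single_of_mem w₀ hw₀L]
      · rw [hc₀, hkm1]; ring
      · intro b hb hbne
        rw [hc b hb hbne]
        ring
    rw [Finset.sum_sub_distrib, ← Finset.mul_sum, ← hSLdef] at h2
    rw [h1]
    linarith
  have hLsum : μ * SL = ((k : ℝ) * SL - y w₀) + (m : ℝ) * SR := by
    calc μ * SL = ∑ w ∈ L, μ * y w := by rw [hSLdef, Finset.mul_sum]
    _ = ∑ w ∈ L, ((∑ j ∈ L, adjMat G w j * y j) + SR) := Finset.sum_congr rfl hw
    _ = ((k : ℝ) * SL - y w₀) + (m : ℝ) * SR := by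
        rw [Finset.sum_add_distrib, Finset.sum_const, hLcard, nsmul_eq_mul, hTsum]
  -- positivity of SL
  have hSLpos : 0 < SL := by
    rcases hSLnn.lt_or_eq with h | h
    · exact h
    · exfalso
      have hSL0 : SL = 0 := h.symm
      have hyL : ∀ j ∈ L, y j = 0 := by
        rw [hSLdef] at hSL0
        intro j hj
        exact (Finset.sum_eq_zero_iff_of_nonneg fun i _ => hynn i).1 hSL0 j hj
      apply hy0
      funext i
      rcases hmemLR i with hi | hi
      · exact hyL i hi
      · have h1 := hv i hi
        rw [hSL0] at h1
        rcases mul_eq_zero.1 h1 with h' | h'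
        · exact absurd h' hμpos.ne'
        · exact h'
  clear_value SL SR
  -- key identity
  have hstar : μ ^ 2 * SL = (m : ℝ) ^ 2 * SL + (k : ℝ) * μ * SL - μ * y w₀ := by
    linear_combination μ * hLsum + (m : ℝ) * hRsum
  have hB1 : μ ^ 2 ≤ (k : ℝ) * μ + (m : ℝ) ^ 2 := by
    nlinarith [mul_nonneg hμpos.le (hynn w₀), hSLpos]
  -- pointwise lower bound on L
  have hperv : ∀ j ∈ L, (m : ℝ) * SL ≤ μ ^ 2 * y j := by
    intro j hj
    have h1 := hw j hj
    have h2 : (0:ℝ) ≤ μ * (∑ i ∈ L, adjMat G j i * y i) := mul_nonneg hμpos.le (hTnn j)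
    nlinarith [hRsum]
  -- lower bound on the neighborhood sum at w₀
  have hTw₀ : ((k : ℝ) - 1) * ((m : ℝ) * SL) ≤ μ ^ 2 * (∑ j ∈ L, adjMat G w₀ j * y j) := by
    have h1 : μ ^ 2 * (∑ j ∈ L, adjMat G w₀ j * y j)
        = ∑ j ∈ L, adjMat G w₀ j * (μ ^ 2 * y j) := by
      rw [Finset.mul_sum]
      exact Finset.sum_congr rfl fun j _ => by ring
    have h2 : ∑ j ∈ L, adjMat G w₀ j * ((m : ℝ) * SL) ≤
        ∑ j ∈ L, adjMat G w₀ j * (μ ^ 2 * y j) :=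
      Finset.sum_le_sum fun j hj =>
        mul_le_mul_of_nonneg_left (hperv j hj) (adjMat_nonneg' G w₀ j)
    have h3 : ∑ j ∈ L, adjMat G w₀ j * ((m : ℝ) * SL) = ((k : ℝ) - 1) * ((m : ℝ) * SL) := by
      rw [← Finset.sum_mul, hrow w₀, hc₀, hkm1]
    rw [h1, ← h3]
    exact h2
  -- the middle inequality
  have hmkpos : (0 : ℝ) ≤ (m : ℝ) - (k : ℝ) := by nlinarith
  have hG1 : μ ^ 2 < (m : ℝ) * (μ + (k : ℝ) - 1) := by
    nlinarith [mul_nonneg hmkpos (by linarith : (0 : ℝ) ≤ μ - ((m : ℝ) + (k : ℝ) / 2)),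
      mul_nonneg (by positivity : (0:ℝ) ≤ (m:ℝ)) (by linarith : (0:ℝ) ≤ (k:ℝ) - 3)]
  -- conclude μ * y w₀ > SL
  have heq : μ ^ 2 * (μ * y w₀) = μ ^ 2 * (∑ j ∈ L, adjMat G w₀ j * y j)
      + μ * ((m : ℝ) * SL) := by
    linear_combination μ ^ 2 * hw w₀ hw₀L + μ * hRsum
  have hyw₀ : SL < μ * y w₀ := by
    have h4 : μ ^ 2 * SL < ((m : ℝ) * (μ + (k : ℝ) - 1)) * SL :=
      mul_lt_mul_of_pos_right hG1 hSLpos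
    have h5 : ((m : ℝ) * (μ + (k : ℝ) - 1)) * SL ≤ μ ^ 2 * (μ * y w₀) := by
      rw [heq]
      nlinarith [hTw₀]
    have h6 : μ ^ 2 * SL < μ ^ 2 * (μ * y w₀) := lt_of_lt_of_le h4 h5
    exact lt_of_mul_lt_mul_left h6 (by positivity)
  have hfinal : μ ^ 2 < (k : ℝ) * μ + (m : ℝ) ^ 2 - 1 := by
    nlinarith [hstar, hyw₀, hSLpos]
  -- final contradiction
  have h2 : s ≤ 2 * μ - (k : ℝ) := by linarith
  have h3 : s * s ≤ (2 * μ - (k : ℝ)) * (2 * μ - (k : ℝ)) := mul_self_le_mul_self hs0 h2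
  nlinarith [hs2, h3, hfinal]
end

section
/- Let k ≥ 1 be an odd integer, let n ≥ 6k, and let G ∈ SPEX(n, H_{2k+3}). Then ρ(G) ≥ (k + √(k² + n²))/2 if n ≡ 0 (mod 4); ρ(G) ≥ (k + √(k² + n² − 4))/2 if n ≡ 2 (mod 4); and ρ(G) ≥ (k + √(k² + n² − 1))/2 if n ≡ 1 or 3 (mod 4). -/
open SimpleGraph

namespace SpexAux

/-- Group index of vertex `i` in the `A`-side. -/
def grp (k a i : ℕ) : ℕ := min (i / (k+1)) (a / (k+1) - 1)

/-- Size of group `g`. -/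
def sizg (k a g : ℕ) : ℕ :=
  if g + 1 < a / (k+1) then k+1 else a - (a/(k+1) - 1) * (k+1)

/-- Threshold for the circulant-complement adjacency in group `g`. -/
def tg (k a g : ℕ) : ℕ := (sizg k a g - 1 - k) / 2

/-- Adjacency relation of our extremal construction. -/
def myAdj (k a i j : ℕ) : Prop :=
  (i < a ∧ a ≤ j) ∨ (a ≤ i ∧ j < a) ∨
  (i < a ∧ j < a ∧ grp k a i = grp k a j ∧
    tg k a (grp k a i) < max i j - min i j ∧
    tg k a (grp k a i) < sizg k a (grp k a i) - (max i j - min i j))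

instance (k a i j : ℕ) : Decidable (myAdj k a i j) := by
  unfold myAdj; infer_instance

/-- The candidate extremal graph. -/
def myGraph (n k a : ℕ) : SimpleGraph (Fin n) where
  Adj i j := myAdj k a i.val j.val
  symm := by
    constructor
    rintro i j (⟨h1, h2⟩ | ⟨h1, h2⟩ | ⟨h1, h2, h3, h4, h5⟩)
    · exact Or.inr (Or.inl ⟨h2, h1⟩)
    · exact Or.inl ⟨h2, h1⟩
    · refine Or.inr (Or.inr ⟨h2, h1, h3.symm, ?_, ?_⟩) <;> rw [← h3] <;> omega
  loopless := by
    constructor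
    rintro i (⟨h1, h2⟩ | ⟨h1, h2⟩ | ⟨h1, h2, h3, h4, h5⟩) <;> omega

lemma grp_bounds (k a : ℕ) (hka : k + 1 ≤ a) {i : ℕ} (hi : i < a) :
    grp k a i * (k+1) ≤ i ∧
    i < grp k a i * (k+1) + sizg k a (grp k a i) ∧
    grp k a i * (k+1) + sizg k a (grp k a i) ≤ a ∧
    k + 1 ≤ sizg k a (grp k a i) ∧
    sizg k a (grp k a i) ≤ 2*k + 1 := by
  have hK0 : 0 < k + 1 := Nat.succ_pos k
  have hdm := Nat.div_add_mod a (k+1)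
  have hdm2 := Nat.div_add_mod i (k+1)
  have hmi : i % (k+1) < k+1 := Nat.mod_lt _ hK0
  have hma : a % (k+1) < k+1 := Nat.mod_lt _ hK0
  have hq1 : 1 ≤ a / (k+1) := (Nat.one_le_div_iff hK0).2 hka
  by_cases hc : i / (k+1) + 1 < a / (k+1)
  · have hgrp : grp k a i = i / (k+1) := by
      unfold grp; rw [min_eq_left]; omega
    have hsz : sizg k a (i / (k+1)) = k+1 := by
      unfold sizg; rw [if_pos]; omega
    have e1 : (i / (k+1) + 1) * (k+1) ≤ (a / (k+1)) * (k+1) :=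
      Nat.mul_le_mul_right (k+1) (by omega)
    have e2 : (a / (k+1)) * (k+1) = (k+1) * (a / (k+1)) := Nat.mul_comm _ _
    have e3 : (i / (k+1) + 1) * (k+1) = (i / (k+1)) * (k+1) + (k+1) := by ring
    have e4 : (i / (k+1)) * (k+1) = (k+1) * (i / (k+1)) := Nat.mul_comm _ _
    rw [hgrp, hsz]; omega
  · have hgrp : grp k a i = a / (k+1) - 1 := by
      unfold grp; rw [min_eq_right]; omega
    have hsz : sizg k a (a / (k+1) - 1) = a - (a / (k+1) - 1) * (k+1) := by
      unfold sizg; rw [if_neg]; omega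
    have e1 : (a / (k+1) - 1) * (k+1) + (k+1) = (a / (k+1)) * (k+1) := by
      have h : a / (k+1) - 1 + 1 = a / (k+1) := by omega
      calc (a / (k+1) - 1) * (k+1) + (k+1) = (a / (k+1) - 1 + 1) * (k+1) := by ring
        _ = (a / (k+1)) * (k+1) := by rw [h]
    have e2 : (a / (k+1)) * (k+1) = (k+1) * (a / (k+1)) := Nat.mul_comm _ _
    have e5 : (a / (k+1) - 1) * (k+1) ≤ (i / (k+1)) * (k+1) :=
      Nat.mul_le_mul_right (k+1) (by omega)
    have e4 : (i / (k+1)) * (k+1) = (k+1) * (i / (k+1)) := Nat.mul_comm _ _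
    rw [hgrp, hsz]; omega

lemma grp_eq_of_interval (k a : ℕ) (hka : k + 1 ≤ a) {u j : ℕ} (hu : u < a)
    (h1 : grp k a u * (k+1) ≤ j)
    (h2 : j < grp k a u * (k+1) + sizg k a (grp k a u)) :
    grp k a j = grp k a u := by
  have hK0 : 0 < k + 1 := Nat.succ_pos k
  have hq1 : 1 ≤ a / (k+1) := (Nat.one_le_div_iff hK0).2 hka
  have hgle : grp k a u ≤ a / (k+1) - 1 := min_le_right _ _
  have hgj : grp k a j = min (j / (k+1)) (a / (k+1) - 1) := rfl
  by_cases hc : grp k a u + 1 < a / (k+1)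
  · have hsz : sizg k a (grp k a u) = k+1 := by
      unfold sizg; rw [if_pos hc]
    rw [hsz] at h2
    have hdiv : j / (k+1) = grp k a u := by
      apply Nat.div_eq_of_lt_le h1
      have : (grp k a u + 1) * (k+1) = grp k a u * (k+1) + (k+1) := by ring
      omega
    rw [hgj, hdiv, min_eq_left (by omega)]
  · have hgq : grp k a u = a / (k+1) - 1 := by omega
    have hj1 : a / (k+1) - 1 ≤ j / (k+1) := by
      rw [Nat.le_div_iff_mul_le hK0]
      rw [hgq] at h1; exact h1
    rw [hgj, min_eq_right hj1, hgq]

lemma sizg_parity (k a : ℕ) (hko : Odd k) (hae : Even a) (hka : k + 1 ≤ a) {i : ℕ}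
    (hi : i < a) :
    sizg k a (grp k a i) = 2 * tg k a (grp k a i) + k + 1 := by
  obtain ⟨_, _, _, hb4, _⟩ := grp_bounds k a hka hi
  have hK0 : 0 < k + 1 := Nat.succ_pos k
  have hKe : Even (k+1) := hko.add_one
  have hse : Even (sizg k a (grp k a i)) := by
    unfold sizg
    split
    · exact hKe
    · have hle : (a / (k+1) - 1) * (k+1) ≤ a := by
        calc (a / (k+1) - 1) * (k+1) ≤ (a / (k+1)) * (k+1) :=
              Nat.mul_le_mul_right _ (Nat.sub_le _ _)
          _ = (k+1) * (a / (k+1)) := Nat.mul_comm _ _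
          _ ≤ a := Nat.mul_div_le a (k+1) |>.trans_eq rfl |>.trans (le_refl a)
      rw [Nat.even_sub hle]
      simp [hae, hKe.mul_left]
  obtain ⟨c, hc⟩ := hse
  obtain ⟨d, hd⟩ := hko
  unfold tg
  omega

lemma card_lt_filter (n m : ℕ) (hm : m ≤ n) :
    (Finset.univ.filter fun j : Fin n => j.val < m).card = m := by
  have h : (Finset.univ.filter fun j : Fin n => j.val < m).card = (Finset.range m).card := by
    refine Finset.card_bij' (fun j _ => j.val) (fun d hd => (⟨d, by
      simp only [Finset.mem_range] at hd; omega⟩ : Fin n)) ?_ ?_ ?_ ?_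
    · intro x hx; simp only [Finset.mem_filter] at hx; simp only [Finset.mem_range]; exact hx.2
    · intro d hd; simp only [Finset.mem_range] at hd
      simp only [Finset.mem_filter, Finset.mem_univ, true_and]; exact hd
    · intro x hx; rfl
    · intro d hd; rfl
  rw [h, Finset.card_range]

lemma card_ge_filter (n m : ℕ) (hm : m ≤ n) :
    (Finset.univ.filter fun j : Fin n => m ≤ j.val).card = n - m := by
  classical
  have h1 : (Finset.univ.filter fun j : Fin n => m ≤ j.val)
      = (Finset.univ.filter fun j : Fin n => ¬ j.val < m) := by
    ext j; simp only [Finset.mem_filter, Finset.mem_univ, true_and]; omega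
  rw [h1, Finset.filter_not, Finset.card_sdiff_of_subset (Finset.filter_subset _ _),
    card_lt_filter n m hm, Finset.card_univ, Fintype.card_fin]

lemma card_nbrA (n k a : ℕ) (hko : Odd k) (hae : Even a) (hka : k + 1 ≤ a) (han : a ≤ n)
    (u : Fin n) (hu : u.val < a) :
    (Finset.univ.filter fun j : Fin n => myAdj k a u.val j.val ∧ j.val < a).card = k := by
  classical
  obtain ⟨hb1, hb2, hb3, hb4, hb5⟩ := grp_bounds k a hka hu
  have hpar := sizg_parity k a hko hae hka hu
  set s := sizg k a (grp k a u.val) with hs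
  set t := tg k a (grp k a u.val) with ht
  set c := grp k a u.val * (k+1) with hc
  have hiff : ∀ j : Fin n, (myAdj k a u.val j.val ∧ j.val < a) ↔
      (c ≤ j.val ∧ j.val < c + s ∧ t < max u.val j.val - min u.val j.val ∧
        t < s - (max u.val j.val - min u.val j.val)) := by
    intro j
    constructor
    · rintro ⟨hadj, hja⟩
      rcases hadj with ⟨_, h2⟩ | ⟨h1, _⟩ | ⟨_, _, h3, h4, h5⟩
      · omega
      · omega
      · obtain ⟨hc1, hc2, _, _, _⟩ := grp_bounds k a hka (show j.val < a from hja)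
        rw [← h3] at hc1 hc2
        exact ⟨hc1, by omega, h4, h5⟩
    · rintro ⟨h1, h2, h3, h4⟩
      have hja : j.val < a := by omega
      have hgj : grp k a j.val = grp k a u.val := grp_eq_of_interval k a hka hu h1 h2
      exact ⟨Or.inr (Or.inr ⟨hu, hja, hgj.symm, h3, h4⟩), hja⟩
  have hset : (Finset.univ.filter fun j : Fin n => myAdj k a u.val j.val ∧ j.val < a)
      = (Finset.univ.filter fun j : Fin n =>
          c ≤ j.val ∧ j.val < c + s ∧ t < max u.val j.val - min u.val j.val ∧
          t < s - (max u.val j.val - min u.val j.val)) := by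
    ext j; simp only [Finset.mem_filter, Finset.mem_univ, true_and]; exact hiff j
  rw [hset]
  have hIcc : (Finset.Icc (t+1) (s-1-t)).card = k := by
    rw [Nat.card_Icc]; omega
  have hbij : (Finset.univ.filter fun j : Fin n =>
      c ≤ j.val ∧ j.val < c + s ∧ t < max u.val j.val - min u.val j.val ∧
      t < s - (max u.val j.val - min u.val j.val)).card
      = (Finset.Icc (t+1) (s-1-t)).card := by
    refine Finset.card_bij'
      (fun j _ => if u.val ≤ j.val then j.val - u.val else j.val + s - u.val)
      (fun d hd => (⟨if u.val + d < c + s then u.val + d else u.val + d - s, by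
        simp only [Finset.mem_Icc] at hd
        split <;> omega⟩ : Fin n)) ?_ ?_ ?_ ?_
    · intro x hx
      simp only [Finset.mem_filter, Finset.mem_univ, true_and] at hx
      simp only [Finset.mem_Icc]
      split <;> omega
    · intro d hd
      simp only [Finset.mem_Icc] at hd
      simp only [Finset.mem_filter, Finset.mem_univ, true_and]
      split <;> omega
    · intro x hx
      simp only [Finset.mem_filter, Finset.mem_univ, true_and] at hx
      apply Fin.ext
      dsimp only
      split <;> split <;> omega
    · intro d hd
      simp only [Finset.mem_Icc] at hd
      dsimp only
      split <;> split <;> omega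
  rw [hbij, hIcc]

lemma card_nbrAB (n k a : ℕ) (hka : k + 1 ≤ a) (han : a ≤ n)
    (u : Fin n) (hu : u.val < a) :
    (Finset.univ.filter fun j : Fin n => myAdj k a u.val j.val ∧ ¬ j.val < a).card = n - a := by
  classical
  have hset : (Finset.univ.filter fun j : Fin n => myAdj k a u.val j.val ∧ ¬ j.val < a)
      = (Finset.univ.filter fun j : Fin n => a ≤ j.val) := by
    ext j; simp only [Finset.mem_filter, Finset.mem_univ, true_and]
    constructor
    · rintro ⟨_, h⟩; omega
    · intro h; exact ⟨Or.inl ⟨hu, h⟩, by omega⟩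
  rw [hset, card_ge_filter n a han]

lemma card_nbrBA (n k a : ℕ) (han : a ≤ n) (u : Fin n) (hu : ¬ u.val < a) :
    (Finset.univ.filter fun j : Fin n => myAdj k a u.val j.val ∧ j.val < a).card = a := by
  classical
  have hset : (Finset.univ.filter fun j : Fin n => myAdj k a u.val j.val ∧ j.val < a)
      = (Finset.univ.filter fun j : Fin n => j.val < a) := by
    ext j; simp only [Finset.mem_filter, Finset.mem_univ, true_and]
    constructor
    · rintro ⟨_, h⟩; exact h
    · intro h; exact ⟨Or.inr (Or.inl ⟨by omega, h⟩), h⟩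
  rw [hset, card_lt_filter n a han]

lemma card_nbrBB (n k a : ℕ) (u : Fin n) (hu : ¬ u.val < a) :
    (Finset.univ.filter fun j : Fin n => myAdj k a u.val j.val ∧ ¬ j.val < a).card = 0 := by
  classical
  rw [Finset.card_eq_zero]
  apply Finset.filter_eq_empty_iff.2
  intro j _
  rintro ⟨⟨h1, _⟩ | ⟨_, h2⟩ | ⟨h1, _, _, _, _⟩, hj⟩ <;> omega

lemma card_group_le (n k a : ℕ) (hka : k + 1 ≤ a) (u0 : ℕ) (hu0 : u0 < a) :
    (Finset.univ.filter fun x : Fin n =>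
      x.val < a ∧ grp k a x.val = grp k a u0).card ≤ 2*k + 1 := by
  classical
  obtain ⟨hb1, hb2, hb3, hb4, hb5⟩ := grp_bounds k a hka hu0
  calc (Finset.univ.filter fun x : Fin n =>
        x.val < a ∧ grp k a x.val = grp k a u0).card
      ≤ (Finset.range (sizg k a (grp k a u0))).card := by
        apply Finset.card_le_card_of_injOn (fun x => x.val - grp k a u0 * (k+1))
        · intro x hx
          simp only [Finset.mem_coe, Finset.mem_filter, Finset.mem_univ, true_and] at hx
          obtain ⟨hx1, hx2⟩ := hx
          obtain ⟨hc1, hc2, _, _, _⟩ := grp_bounds k a hka hx1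
          rw [hx2] at hc1 hc2
          simp only [Finset.mem_coe, Finset.mem_range]
          omega
        · intro x hx y hy hxy
          simp only [Finset.coe_filter, Set.mem_setOf_eq] at hx hy
          obtain ⟨hc1, _, _, _, _⟩ := grp_bounds k a hka hx.2.1
          obtain ⟨hd1, _, _, _, _⟩ := grp_bounds k a hka hy.2.1
          rw [hx.2.2] at hc1
          rw [hy.2.2] at hd1
          exact Fin.ext (by simp only at hxy; omega)
    _ ≤ 2*k + 1 := by rw [Finset.card_range]; exact hb5

lemma myGraph_free (n k a : ℕ) (hk : 1 ≤ k) (hko : Odd k) (hae : Even a)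
    (hka : k + 1 ≤ a) (han : a ≤ n) :
    ¬ ContainsCopy (fan (2*k+3)) (myGraph n k a) := by
  classical
  rintro ⟨f, hf⟩
  set v := f (Sum.inl 0) with hv
  set p : Fin (2*k+3) → Fin n := fun j => f (Sum.inr j) with hp
  have hcenter : ∀ j : Fin (2*k+3), (fan (2*k+3)).Adj (Sum.inl 0) (Sum.inr j) := by
    intro j; trivial
  have hvp : ∀ j, myAdj k a v.val (p j).val := fun j => hf _ _ (hcenter j)
  have hpadj : ∀ (j1 j2 : Fin (2*k+3)), j1.val + 1 = j2.val →
      myAdj k a (p j1).val (p j2).val := by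
    intro j1 j2 h
    refine hf _ _ ?_
    show (pathGraph (2*k+3)).Adj j1 j2
    exact pathGraph_adj.2 (Or.inl h)
  have hpinj : Function.Injective p := by
    intro x y h
    have := f.injective h
    exact Sum.inr.inj this
  by_cases hva : v.val < a
  · -- center in A: at most k path vertices in A, no two consecutive in B
    have hSk : (Finset.univ.filter (fun j : Fin (2*k+3) => (p j).val < a)).card ≤ k := by
      have hcard := card_nbrA n k a hko hae hka han v hva
      refine le_trans (Finset.card_le_card_of_injOn p ?_ ?_) (le_of_eq hcard)
      · intro j hj
        simp only [Finset.mem_coe, Finset.mem_filter, Finset.mem_univ, true_and] at hj ⊢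
        exact ⟨hvp j, hj⟩
      · intro x _ y _ h; exact hpinj h
    have hScompl : (Finset.univ.filter
        (fun j : Fin (2*k+3) => ¬ (p j).val < a)).card ≤ k + 2 := by
      have h2 : (Finset.range (k+2)).card = k + 2 := Finset.card_range _
      rw [← h2]
      apply Finset.card_le_card_of_injOn (fun j => j.val / 2)
      · intro j _
        simp only [Finset.mem_coe, Finset.mem_range]
        omega
      · intro j1 h1 j2 h2 hdd
        simp only [Finset.coe_filter, Set.mem_setOf_eq] at h1 h2
        by_contra hne
        have hBB : ∀ (x y : Fin (2*k+3)), x.val + 1 = y.val →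
            ¬ (p x).val < a → ¬ (p y).val < a → False := by
          intro x y hxy hx hy
          rcases hpadj x y hxy with ⟨h1', h2'⟩ | ⟨h1', h2'⟩ | ⟨h1', _, _, _, _⟩ <;> omega
        have hvne : j1.val ≠ j2.val := fun h => hne (Fin.ext h)
        dsimp only at hdd
        have : j1.val + 1 = j2.val ∨ j2.val + 1 = j1.val := by omega
        rcases this with h | h
        · exact hBB j1 j2 h h1.2 h2.2
        · exact hBB j2 j1 h h2.2 h1.2
    have htot := Finset.card_filter_add_card_filter_not
      (s := (Finset.univ : Finset (Fin (2*k+3))))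
      (p := fun j : Fin (2*k+3) => (p j).val < a)
    rw [Finset.card_univ, Fintype.card_fin] at htot
    omega
  · -- center in B: all path vertices in one group of A
    have hpA : ∀ j, (p j).val < a := by
      intro j
      rcases hvp j with ⟨h1, _⟩ | ⟨_, h2⟩ | ⟨h1, _, _, _, _⟩ <;> omega
    have hgrp : ∀ (j1 j2 : Fin (2*k+3)), j1.val + 1 = j2.val →
        grp k a (p j1).val = grp k a (p j2).val := by
      intro j1 j2 h
      rcases hpadj j1 j2 h with ⟨_, h2'⟩ | ⟨h1', _⟩ | ⟨_, _, h3', _, _⟩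
      · exact absurd (hpA j2) (by omega)
      · exact absurd (hpA j1) (by omega)
      · exact h3'
    have h0 : (0 : ℕ) < 2*k+3 := by omega
    have hall : ∀ j : Fin (2*k+3), grp k a (p j).val = grp k a (p ⟨0, h0⟩).val := by
      intro j
      obtain ⟨jv, hjv⟩ := j
      induction jv with
      | zero => rfl
      | succ m ih =>
        have hm : m < 2*k+3 := by omega
        have hstep := hgrp ⟨m, hm⟩ ⟨m+1, hjv⟩ rfl
        rw [← hstep]
        exact ih hm
    have hsub : (2*k+3 : ℕ) ≤ (Finset.univ.filter fun x : Fin n =>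
        x.val < a ∧ grp k a x.val = grp k a (p ⟨0, h0⟩).val).card := by
      have hle := Finset.card_le_card_of_injOn p
        (s := (Finset.univ : Finset (Fin (2*k+3))))
        (t := Finset.univ.filter fun x : Fin n =>
          x.val < a ∧ grp k a x.val = grp k a (p ⟨0, h0⟩).val)
        (fun j _ => by
          simp only [Finset.mem_coe, Finset.mem_filter, Finset.mem_univ, true_and]
          exact ⟨hpA j, hall j⟩)
        (fun x _ y _ h => hpinj h)
      rwa [Finset.card_univ, Fintype.card_fin] at hle
    have hgle := card_group_le n k a hka (p ⟨0, h0⟩).val (hpA ⟨0, h0⟩)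
    omega

lemma adjMat_myGraph_apply (n k a : ℕ) (i j : Fin n) :
    adjMat (myGraph n k a) i j = if myAdj k a i.val j.val then (1:ℝ) else 0 := by
  classical
  have h1 : adjMat (myGraph n k a) i j
      = if (myGraph n k a).Adj i j then (1:ℝ) else 0 := by
    unfold adjMat
    rw [SimpleGraph.adjMatrix_apply]
  rw [h1]
  by_cases h : myAdj k a i.val j.val
  · rw [if_pos (show (myGraph n k a).Adj i j from h), if_pos h]
  · rw [if_neg (show ¬ (myGraph n k a).Adj i j from h), if_neg h]

lemma specRad_ge_myGraph (n k a : ℕ) (hk : 1 ≤ k) (hko : Odd k) (hae : Even a)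
    (hka : k + 1 ≤ a) (han : a < n) :
    ((k:ℝ) + Real.sqrt ((k:ℝ)^2 + 4*(a:ℝ)*((n:ℝ) - (a:ℝ)))) / 2
      ≤ specRad (myGraph n k a) := by
  classical
  have hb0 : (0:ℝ) ≤ (n:ℝ) - (a:ℝ) := by
    have : (a:ℝ) ≤ (n:ℝ) := Nat.cast_le.2 (le_of_lt han)
    linarith
  have ha0 : (0:ℝ) ≤ (a:ℝ) := Nat.cast_nonneg a
  have harg : (0:ℝ) ≤ (k:ℝ)^2 + 4*(a:ℝ)*((n:ℝ) - (a:ℝ)) := by positivity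
  set s0 := Real.sqrt ((k:ℝ)^2 + 4*(a:ℝ)*((n:ℝ) - (a:ℝ))) with hs0
  have hs0nn : 0 ≤ s0 := Real.sqrt_nonneg _
  have hs0sq : s0^2 = (k:ℝ)^2 + 4*(a:ℝ)*((n:ℝ) - (a:ℝ)) := Real.sq_sqrt harg
  set ρ := ((k:ℝ) + s0)/2 with hρ
  have hk1 : (1:ℝ) ≤ (k:ℝ) := by exact_mod_cast hk
  have hρpos : 0 < ρ := by rw [hρ]; linarith
  have hρeq : ρ^2 = (k:ℝ)*ρ + (a:ℝ)*((n:ℝ) - (a:ℝ)) := by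
    rw [hρ]; nlinarith [hs0sq]
  set v : Fin n → ℝ := fun u => if u.val < a then ρ else (a:ℝ) with hvdef
  have hmv : ∀ u : Fin n, (adjMat (myGraph n k a)).mulVec v u = ρ * v u := by
    intro u
    have hexp : (adjMat (myGraph n k a)).mulVec v u =
        (((Finset.univ.filter fun j : Fin n =>
            myAdj k a u.val j.val ∧ j.val < a).card : ℕ) : ℝ) * ρ +
        (((Finset.univ.filter fun j : Fin n =>
            myAdj k a u.val j.val ∧ ¬ j.val < a).card : ℕ) : ℝ) * (a:ℝ) := by
      have e1 : (adjMat (myGraph n k a)).mulVec v u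
          = ∑ j : Fin n, (if myAdj k a u.val j.val then (1:ℝ) else 0) * v j := by
        simp only [Matrix.mulVec, dotProduct, adjMat_myGraph_apply]
      rw [e1]
      have e2 : ∀ j : Fin n, (if myAdj k a u.val j.val then (1:ℝ) else 0) * v j
          = (if myAdj k a u.val j.val ∧ j.val < a then ρ else 0)
            + (if myAdj k a u.val j.val ∧ ¬ j.val < a then (a:ℝ) else 0) := by
        intro j
        by_cases h1 : myAdj k a u.val j.val <;> by_cases h2 : j.val < a <;>
          simp [hvdef, h1, h2]
      rw [Finset.sum_congr rfl (fun j _ => e2 j), Finset.sum_add_distrib]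
      congr 1
      · rw [← Finset.sum_filter, Finset.sum_const, nsmul_eq_mul]
      · rw [← Finset.sum_filter, Finset.sum_const, nsmul_eq_mul]
    by_cases hu : u.val < a
    · rw [hexp, card_nbrA n k a hko hae hka (le_of_lt han) u hu,
        card_nbrAB n k a hka (le_of_lt han) u hu]
      have hvu : v u = ρ := if_pos hu
      rw [hvu]
      have hcast : ((n - a : ℕ) : ℝ) = (n:ℝ) - (a:ℝ) := by
        rw [Nat.cast_sub (le_of_lt han)]
      rw [hcast]
      nlinarith [hρeq]
    · rw [hexp, card_nbrBA n k a (le_of_lt han) u hu, card_nbrBB n k a u hu]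
      have hvu : v u = (a:ℝ) := if_neg hu
      rw [hvu]
      push_cast
      ring
  have hveq : (adjMat (myGraph n k a)).mulVecLin v = ρ • v := by
    ext u
    rw [Matrix.mulVecLin_apply]
    rw [hmv u]
    simp [Pi.smul_apply, smul_eq_mul]
  have h0n : 0 < n := lt_of_le_of_lt (Nat.zero_le a) han
  have hv0 : v ≠ 0 := by
    intro h
    have h0a : (⟨0, h0n⟩ : Fin n).val < a := by simp; omega
    have hval : v ⟨0, h0n⟩ = ρ := if_pos h0a
    rw [h] at hval
    simp at hval
    linarith
  have hev : Module.End.HasEigenvalue (adjMat (myGraph n k a)).mulVecLin ρ :=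
    Module.End.hasEigenvalue_of_hasEigenvector
      ⟨Module.End.mem_eigenspace_iff.2 hveq, hv0⟩
  have hbdd : BddAbove {μ : ℝ |
      Module.End.HasEigenvalue (adjMat (myGraph n k a)).mulVecLin μ} :=
    Set.Finite.bddAbove (Module.End.finite_hasEigenvalue _)
  exact le_csSup hbdd hev

end SpexAux

/-- lower bounds on the spectral radius of graphs in `SPEX(n, H_{2k+3})`
for odd `k ≥ 1` and `n ≥ 6k`, according to `n mod 4`. -/
theorem spex_spectral_lower_bound_odd_k (k n : ℕ) (hko : Odd k) (hk : 1 ≤ k)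
    (hn : 6 * k ≤ n) :
    ∀ G ∈ SPEX n (fan (2 * k + 3)),
      (n % 4 = 0 →
        ((k : ℝ) + Real.sqrt ((k : ℝ) ^ 2 + (n : ℝ) ^ 2)) / 2 ≤ specRad G) ∧
      (n % 4 = 2 →
        ((k : ℝ) + Real.sqrt ((k : ℝ) ^ 2 + (n : ℝ) ^ 2 - 4)) / 2 ≤ specRad G) ∧
      (n % 4 = 1 ∨ n % 4 = 3 →
        ((k : ℝ) + Real.sqrt ((k : ℝ) ^ 2 + (n : ℝ) ^ 2 - 1)) / 2 ≤ specRad G) := by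
  intro G hG
  obtain ⟨hGfree, hGmax⟩ := hG
  have key : ∀ a : ℕ, Even a → k + 1 ≤ a → a < n →
      ((k:ℝ) + Real.sqrt ((k:ℝ)^2 + 4*(a:ℝ)*((n:ℝ) - (a:ℝ)))) / 2 ≤ specRad G := by
    intro a hae hka han
    have h1 := SpexAux.myGraph_free n k a hk hko hae hka (le_of_lt han)
    have h2 := hGmax _ h1
    have h3 := SpexAux.specRad_ge_myGraph n k a hk hko hae hka han
    linarith
  refine ⟨?_, ?_, ?_⟩
  · intro h4
    obtain ⟨m, rfl⟩ : ∃ m, n = 4*m := ⟨n/4, by omega⟩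
    have hkey := key (2*m) ⟨m, by ring⟩ (by omega) (by omega)
    have harg : (k:ℝ)^2 + 4*((2*m : ℕ):ℝ)*(((4*m : ℕ):ℝ) - ((2*m : ℕ):ℝ))
        = (k:ℝ)^2 + ((4*m : ℕ):ℝ)^2 := by push_cast; ring
    rw [harg] at hkey
    exact hkey
  · intro h4
    obtain ⟨m, rfl⟩ : ∃ m, n = 4*m + 2 := ⟨n/4, by omega⟩
    have hkey := key (2*m+2) ⟨m+1, by ring⟩ (by omega) (by omega)
    have harg : (k:ℝ)^2 + 4*((2*m+2 : ℕ):ℝ)*(((4*m+2 : ℕ):ℝ) - ((2*m+2 : ℕ):ℝ))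
        = (k:ℝ)^2 + ((4*m+2 : ℕ):ℝ)^2 - 4 := by push_cast; ring
    rw [harg] at hkey
    exact hkey
  · rintro (h4 | h4)
    · obtain ⟨m, rfl⟩ : ∃ m, n = 4*m + 1 := ⟨n/4, by omega⟩
      have hkey := key (2*m) ⟨m, by ring⟩ (by omega) (by omega)
      have harg : (k:ℝ)^2 + 4*((2*m : ℕ):ℝ)*(((4*m+1 : ℕ):ℝ) - ((2*m : ℕ):ℝ))
          = (k:ℝ)^2 + ((4*m+1 : ℕ):ℝ)^2 - 1 := by push_cast; ring
      rw [harg] at hkey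
      exact hkey
    · obtain ⟨m, rfl⟩ : ∃ m, n = 4*m + 3 := ⟨n/4, by omega⟩
      have hkey := key (2*m+2) ⟨m+1, by ring⟩ (by omega) (by omega)
      have harg : (k:ℝ)^2 + 4*((2*m+2 : ℕ):ℝ)*(((4*m+3 : ℕ):ℝ) - ((2*m+2 : ℕ):ℝ))
          = (k:ℝ)^2 + ((4*m+3 : ℕ):ℝ)^2 - 1 := by push_cast; ring
      rw [harg] at hkey
      exact hkey
end

section
/- Let k ≥ 2 be an even integer, let n ≥ 6k, and let G ∈ SPEX(n, H_{2k+3}). Then ρ(G) ≥ (k + √(k² + n²))/2 if n is even, and ρ(G) ≥ (k + √(k² + n² − 1))/2 if n is odd. -/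
open SimpleGraph

namespace SpexAux

/-- block length -/
def Lb (K : ℕ) : ℕ := 2*K+1
def qb (K m : ℕ) : ℕ := m / Lb K
def rb (K m : ℕ) : ℕ := m % Lb K
def blk (K m i : ℕ) : ℕ := min (i / Lb K) (qb K m - 1)
def bsz (K m b : ℕ) : ℕ := if b = qb K m - 1 then Lb K + rb K m else Lb K
def pos (K m i : ℕ) : ℕ := i - Lb K * blk K m i
def sz (K m i : ℕ) : ℕ := bsz K m (blk K m i)
def dd (K m i j : ℕ) : ℕ := (pos K m j + sz K m i - pos K m i) % sz K m i
def Zadj (K m i j : ℕ) : Prop :=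
  blk K m i = blk K m j ∧ 1 ≤ min (dd K m i j) (dd K m j i) ∧
    min (dd K m i j) (dd K m j i) ≤ K

instance (K m i j : ℕ) : Decidable (Zadj K m i j) :=
  inferInstanceAs (Decidable (_ ∧ _ ∧ _))

variable {K m : ℕ}

lemma Lb_pos : 0 < Lb K := by unfold Lb; omega

lemma qr_eq : Lb K * qb K m + rb K m = m := Nat.div_add_mod m (Lb K)

lemma rb_lt : rb K m < Lb K := Nat.mod_lt _ Lb_pos

lemma qb_pos (hm : Lb K ≤ m) : 1 ≤ qb K m := by
  exact (Nat.one_le_div_iff Lb_pos).2 hm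

lemma bsz_ge (b : ℕ) : Lb K ≤ bsz K m b := by unfold bsz; split <;> omega

lemma bsz_le (b : ℕ) : bsz K m b ≤ 2 * Lb K - 1 := by
  have h := rb_lt (K := K) (m := m)
  unfold bsz; split <;> omega

lemma blk_lt (hm : Lb K ≤ m) (i : ℕ) : blk K m i < qb K m := by
  have := qb_pos (K := K) hm
  unfold blk; omega

/-- decomposition of `i < m`. -/
lemma decomp (hm : Lb K ≤ m) {i : ℕ} (hi : i < m) :
    Lb K * blk K m i ≤ i ∧ i < Lb K * blk K m i + sz K m i := by
  have hq := qb_pos (K := K) hm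
  have hqr := qr_eq (K := K) (m := m)
  have h1 := Nat.div_add_mod i (Lb K)
  have h2 : i % Lb K < Lb K := Nat.mod_lt _ Lb_pos
  have hLb : 0 < Lb K := Lb_pos
  rcases le_or_gt (i / Lb K) (qb K m - 1) with h | h
  · have hb : blk K m i = i / Lb K := min_eq_left h
    have hs : Lb K ≤ sz K m i := bsz_ge _
    rw [hb]
    omega
  · have hb : blk K m i = qb K m - 1 := min_eq_right (le_of_lt h)
    have hs : sz K m i = Lb K + rb K m := by
      unfold sz; rw [hb]; unfold bsz; simp
    have h3 : qb K m ≤ i / Lb K := by omega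
    have h4 : Lb K * qb K m ≤ Lb K * (i / Lb K) := Nat.mul_le_mul_left _ h3
    have h5 : Lb K * (qb K m - 1) + Lb K = Lb K * qb K m := by
      have : qb K m - 1 + 1 = qb K m := by omega
      calc Lb K * (qb K m - 1) + Lb K = Lb K * (qb K m - 1 + 1) := by ring
        _ = Lb K * qb K m := by rw [this]
    rw [hb, hs]
    omega

lemma decomp' (hm : Lb K ≤ m) {i : ℕ} (hi : i < m) :
    i = Lb K * blk K m i + pos K m i ∧ pos K m i < sz K m i := by
  have h := decomp hm hi
  unfold pos
  omega

/-- membership in a block -/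
lemma mem_blk (hm : Lb K ≤ m) {b t : ℕ} (hb : b < qb K m) (ht : t < bsz K m b) :
    Lb K * b + t < m ∧ blk K m (Lb K * b + t) = b ∧ pos K m (Lb K * b + t) = t := by
  have hqr := qr_eq (K := K) (m := m)
  have hLb : 0 < Lb K := Lb_pos
  have hdiv : (Lb K * b + t) / Lb K = b + t / Lb K := Nat.mul_add_div hLb b t
  have h5 : Lb K * (qb K m - 1) + Lb K = Lb K * qb K m := by
    have h6 : qb K m - 1 + 1 = qb K m := by omega
    calc Lb K * (qb K m - 1) + Lb K = Lb K * (qb K m - 1 + 1) := by ring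
      _ = Lb K * qb K m := by rw [h6]
  have hlt : Lb K * b + t < m := by
    by_cases hbq : b = qb K m - 1
    · have : bsz K m b = Lb K + rb K m := by unfold bsz; simp [hbq]
      rw [hbq]
      omega
    · have hbsz : bsz K m b = Lb K := by unfold bsz; simp [hbq]
      have hb1 : b + 1 ≤ qb K m - 1 := by omega
      have : Lb K * (b+1) ≤ Lb K * (qb K m - 1) := Nat.mul_le_mul_left _ hb1
      have h7 : Lb K * (b+1) = Lb K * b + Lb K := by ring
      omega
  have hblk : blk K m (Lb K * b + t) = b := by
    have hblk0 : blk K m (Lb K * b + t) = min (b + t / Lb K) (qb K m - 1) := by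
      unfold blk; rw [hdiv]
    by_cases hbq : b = qb K m - 1
    · rw [hblk0, hbq]; exact min_eq_right (Nat.le_add_right _ _)
    · have hbsz : bsz K m b = Lb K := by unfold bsz; simp [hbq]
      have : t / Lb K = 0 := Nat.div_eq_of_lt (by omega)
      rw [hblk0, this]
      have hble : b < qb K m - 1 := by omega
      omega
  refine ⟨hlt, hblk, ?_⟩
  unfold pos
  rw [hblk]
  omega

end SpexAux

namespace SpexAux
variable {K m : ℕ}

lemma sz_pos (i : ℕ) : 0 < sz K m i := lt_of_lt_of_le Lb_pos (bsz_ge _)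

lemma sz_ge (i : ℕ) : Lb K ≤ sz K m i := bsz_ge _

lemma sz_eq_of_blk {i j : ℕ} (h : blk K m i = blk K m j) : sz K m i = sz K m j := by
  unfold sz; rw [h]

/-- the key dd computation: stepping by δ inside the block. -/
lemma dd_step (hm : Lb K ≤ m) {i δ : ℕ} (hi : i < m) (hδ : δ < sz K m i) :
    Lb K * blk K m i + (pos K m i + δ) % sz K m i < m ∧
    blk K m (Lb K * blk K m i + (pos K m i + δ) % sz K m i) = blk K m i ∧
    pos K m (Lb K * blk K m i + (pos K m i + δ) % sz K m i) = (pos K m i + δ) % sz K m i ∧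
    dd K m i (Lb K * blk K m i + (pos K m i + δ) % sz K m i) = δ := by
  have hs0 : 0 < sz K m i := sz_pos i
  have hmod : (pos K m i + δ) % sz K m i < sz K m i := Nat.mod_lt _ hs0
  have hmb := mem_blk (K := K) (m := m) hm (blk_lt hm i) (t := (pos K m i + δ) % sz K m i)
    (by unfold sz at hmod; exact hmod)
  refine ⟨hmb.1, hmb.2.1, hmb.2.2, ?_⟩
  unfold dd
  rw [hmb.2.2]
  have ha := (decomp' hm hi).2
  set s := sz K m i with hs
  set a := pos K m i with hap
  have h1 : (a + δ) % s + s - a = (a + δ) % s + (s - a) := by omega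
  rw [h1]
  have h2 : ((a + δ) % s + (s - a)) % s = ((a + δ) + (s - a)) % s := Nat.mod_add_mod _ _ _
  have h3 : (a + δ) + (s - a) = δ + s := by omega
  rw [h2, h3, Nat.add_mod_right]
  exact Nat.mod_eq_of_lt hδ

/-- dd symmetry-type facts for distinct vertices in the same block. -/
lemma dd_pair (hm : Lb K ≤ m) {i j : ℕ} (hi : i < m) (hj : j < m)
    (hb : blk K m i = blk K m j) (hp : pos K m i ≠ pos K m j) :
    dd K m i j + dd K m j i = sz K m i ∧ 1 ≤ dd K m i j ∧ dd K m i j < sz K m i := by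
  have hs : sz K m j = sz K m i := (sz_eq_of_blk hb).symm
  have ha := (decomp' hm hi).2
  have he := (decomp' hm hj).2
  unfold dd
  rw [hs]
  set s := sz K m i with hsdef
  set a := pos K m i
  set e := pos K m j
  rcases lt_or_gt_of_ne hp with h | h
  · -- a < e
    have h1 : (e + s - a) % s = e - a := by
      rw [Nat.mod_eq_sub_mod (by omega)]
      have : e + s - a - s = e - a := by omega
      rw [this]
      exact Nat.mod_eq_of_lt (by omega)
    have h2 : (a + s - e) % s = a + s - e := Nat.mod_eq_of_lt (by omega)
    rw [h1, h2]
    omega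
  · -- e < a
    have h1 : (e + s - a) % s = e + s - a := Nat.mod_eq_of_lt (by omega)
    have h2 : (a + s - e) % s = a - e := by
      rw [Nat.mod_eq_sub_mod (by omega)]
      have : a + s - e - s = a - e := by omega
      rw [this]
      exact Nat.mod_eq_of_lt (by omega)
    rw [h1, h2]
    omega

lemma dd_self_pos (hm : Lb K ≤ m) {i j : ℕ} (hi : i < m) (hj : j < m)
    (hb : blk K m i = blk K m j) (hp : pos K m i = pos K m j) : i = j := by
  have h1 := (decomp' hm hi).1
  have h2 := (decomp' hm hj).1
  rw [h1, h2, hb, hp]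

lemma Zadj_pos_ne {i j : ℕ} (h : Zadj K m i j) : pos K m i ≠ pos K m j := by
  intro hp
  have : dd K m i j = 0 := by
    unfold dd
    rw [hp]
    have : pos K m j + sz K m i - pos K m j = sz K m i := by omega
    rw [this, Nat.mod_self]
  have h2 := h.2.1
  omega

lemma dd_zero_of_pos_eq {i j : ℕ} (hp : pos K m i = pos K m j) : dd K m i j = 0 := by
  unfold dd
  rw [← hp]
  have h : pos K m i + sz K m i - pos K m i = sz K m i := by omega
  rw [h, Nat.mod_self]

/-- THE degree lemma: each vertex of `Z` has exactly `2K` neighbors. -/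
lemma Z_degree (hm : Lb K ≤ m) (hK : 1 ≤ K) {i : ℕ} (hi : i < m) :
    ((Finset.range m).filter (Zadj K m i)).card = 2 * K := by
  classical
  have hs2 : 2 * K + 1 ≤ sz K m i := sz_ge i
  have hae : pos K m i < sz K m i := (decomp' hm hi).2
  have hDcard : (Finset.Icc 1 K ∪ Finset.Icc (sz K m i - K) (sz K m i - 1)).card = 2 * K := by
    rw [Finset.card_union_of_disjoint]
    · rw [Nat.card_Icc, Nat.card_Icc]
      omega
    · rw [Finset.disjoint_left]
      intro x hx hx'
      simp only [Finset.mem_Icc] at hx hx'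
      omega
  rw [← hDcard]
  apply Finset.card_bij' (fun j _ => dd K m i j)
    (fun δ _ => Lb K * blk K m i + (pos K m i + δ) % sz K m i)
  · -- forward into D
    intro j hj
    simp only [Finset.mem_filter, Finset.mem_range] at hj
    obtain ⟨hjm, hadj⟩ := hj
    have hpair := dd_pair hm hi hjm hadj.1 (Zadj_pos_ne hadj)
    have hmin := hadj.2.2
    simp only [Finset.mem_union, Finset.mem_Icc]
    omega
  · -- backward into filter
    intro δ hδ
    simp only [Finset.mem_union, Finset.mem_Icc] at hδ
    have hδs : δ < sz K m i := by omega
    have hst := dd_step hm hi hδs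
    simp only [Finset.mem_filter, Finset.mem_range]
    refine ⟨hst.1, hst.2.1.symm, ?_⟩
    have hδ1 : 1 ≤ δ := by omega
    have hpne : pos K m i ≠ pos K m (Lb K * blk K m i + (pos K m i + δ) % sz K m i) := by
      intro hp
      have := dd_zero_of_pos_eq (K := K) (m := m) hp
      rw [hst.2.2.2] at this
      omega
    have hpair := dd_pair hm hi hst.1 hst.2.1.symm hpne
    rw [hst.2.2.2] at hpair ⊢
    omega
  · -- left inverse
    intro j hj
    simp only [Finset.mem_filter, Finset.mem_range] at hj
    obtain ⟨hjm, hadj⟩ := hj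
    have hb := hadj.1
    have hee : pos K m j < sz K m i := by
      rw [sz_eq_of_blk hb]
      exact (decomp' hm hjm).2
    have hkey : (pos K m i + dd K m i j) % sz K m i = pos K m j := by
      unfold dd
      rw [Nat.add_mod_mod]
      have h3 : pos K m i + (pos K m j + sz K m i - pos K m i) = pos K m j + sz K m i := by
        omega
      rw [h3, Nat.add_mod_right]
      exact Nat.mod_eq_of_lt hee
    rw [hkey]
    have := (decomp' hm hjm).1
    rw [hb]
    omega
  · -- right inverse
    intro δ hδ
    simp only [Finset.mem_union, Finset.mem_Icc] at hδ
    have hδs : δ < sz K m i := by omega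
    exact (dd_step hm hi hδs).2.2.2

lemma Zadj_symm {i j : ℕ} (h : Zadj K m i j) : Zadj K m j i :=
  ⟨h.1.symm, by rw [min_comm]; exact h.2.1, by rw [min_comm]; exact h.2.2⟩

lemma Zadj_irrefl (i : ℕ) : ¬ Zadj K m i i := by
  intro h
  have h0 : dd K m i i = 0 := dd_zero_of_pos_eq rfl
  have := h.2.1
  omega

end SpexAux


namespace SpexAux

/-- The extremal-type host graph: a balanced complete bipartite graph plus a
`2K`-regular union of circulant blocks on the first part. -/
def Hg (K n : ℕ) : SimpleGraph (Fin n) where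
  Adj i j := (i.val < n/2 ∧ j.val < n/2 ∧ Zadj K (n/2) i.val j.val)
    ∨ (i.val < n/2 ∧ n/2 ≤ j.val) ∨ (n/2 ≤ i.val ∧ j.val < n/2)
  symm := by
    constructor
    intro i j h
    rcases h with ⟨h1,h2,h3⟩ | ⟨h1,h2⟩ | ⟨h1,h2⟩
    · exact Or.inl ⟨h2,h1, Zadj_symm h3⟩
    · exact Or.inr (Or.inr ⟨h2,h1⟩)
    · exact Or.inr (Or.inl ⟨h2,h1⟩)
  loopless := by
    constructor
    intro i h
    rcases h with ⟨h1,h2,h3⟩ | ⟨h1,h2⟩ | ⟨h1,h2⟩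
    · exact Zadj_irrefl _ h3
    · omega
    · omega

lemma Hg_adj_iff {K n : ℕ} (i j : Fin n) : (Hg K n).Adj i j ↔
    ((i.val < n/2 ∧ j.val < n/2 ∧ Zadj K (n/2) i.val j.val)
    ∨ (i.val < n/2 ∧ n/2 ≤ j.val) ∨ (n/2 ≤ i.val ∧ j.val < n/2)) := Iff.rfl

theorem Hg_fanfree (K n k : ℕ) (hK : 1 ≤ K) (hk : k = 2*K) (hm : Lb K ≤ n / 2) :
    ¬ ContainsCopy (fan (2*k+3)) (Hg K n) := by
  classical
  rintro ⟨f, hf⟩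
  set m := n / 2 with hmdef
  have hadj : ∀ j : Fin (2*k+3), (Hg K n).Adj (f (Sum.inl 0)) (f (Sum.inr j)) :=
    fun j => hf (Sum.inl 0) (Sum.inr j) trivial
  have hpath : ∀ (j1 j2 : Fin (2*k+3)), j1.val + 1 = j2.val →
      (Hg K n).Adj (f (Sum.inr j1)) (f (Sum.inr j2)) := by
    intro j1 j2 h
    exact hf (Sum.inr j1) (Sum.inr j2)
      (show (SimpleGraph.pathGraph (2*k+3)).Adj j1 j2 from
        SimpleGraph.pathGraph_adj.mpr (Or.inl h))
  have hvinj : ∀ j1 j2 : Fin (2*k+3),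
      (f (Sum.inr j1)).val = (f (Sum.inr j2)).val → j1 = j2 := by
    intro j1 j2 h
    exact Sum.inr.inj (f.injective (Fin.val_injective h))
  rcases lt_or_ge (f (Sum.inl 0)).val m with hu | hu
  · -- apex in the first part
    have hScard : (Finset.univ.filter
        (fun j : Fin (2*k+3) => (f (Sum.inr j)).val < m)).card ≤ 2*K := by
      have hle : (Finset.univ.filter
          (fun j : Fin (2*k+3) => (f (Sum.inr j)).val < m)).card
          ≤ ((Finset.range m).filter (Zadj K m (f (Sum.inl 0)).val)).card := by
        apply Finset.card_le_card_of_injOn (fun j => (f (Sum.inr j)).val)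
        · intro j hj
          simp only [Finset.mem_coe, Finset.mem_filter, Finset.mem_univ, true_and] at hj
          simp only [Finset.mem_coe, Finset.mem_filter, Finset.mem_range]
          rcases hadj j with ⟨_,_,hz⟩ | ⟨_,h2⟩ | ⟨h1,_⟩
          · exact ⟨hj, hz⟩
          · omega
          · omega
        · intro j1 _ j2 _ hval
          exact hvinj j1 j2 hval
      rwa [Z_degree hm hK hu] at hle
    have hTcard : (Finset.univ.filter
        (fun j : Fin (2*k+3) => ¬ (f (Sum.inr j)).val < m)).card ≤ 2*K+2 := by
      have hle : (Finset.univ.filter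
          (fun j : Fin (2*k+3) => ¬ (f (Sum.inr j)).val < m)).card
          ≤ (Finset.range (2*K+2)).card := by
        apply Finset.card_le_card_of_injOn (fun j => j.val / 2)
        · intro j hj
          have := j.isLt
          simp only [Finset.mem_coe, Finset.mem_range]
          omega
        · intro j1 h1 j2 h2 hdiv
          simp only [Finset.coe_filter, Set.mem_setOf_eq, Finset.mem_univ, true_and] at h1 h2
          by_contra hne
          have hv : j1.val ≠ j2.val := fun h => hne (Fin.ext h)
          have hj1 := j1.isLt
          have hj2 := j2.isLt
          simp only at hdiv
          rcases (by omega : j1.val + 1 = j2.val ∨ j2.val + 1 = j1.val) with hc | hc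
          · rcases hpath j1 j2 hc with ⟨ha,_,_⟩|⟨ha,_⟩|⟨_,hb⟩
            · exact h1 ha
            · exact h1 ha
            · exact h2 hb
          · rcases hpath j2 j1 hc with ⟨ha,_,_⟩|⟨ha,_⟩|⟨_,hb⟩
            · exact h2 ha
            · exact h2 ha
            · exact h1 hb
      simpa using hle
    have hsplit := Finset.card_filter_add_card_filter_not
      (s := (Finset.univ : Finset (Fin (2*k+3))))
      (p := fun j => (f (Sum.inr j)).val < m)
    rw [Finset.card_univ, Fintype.card_fin] at hsplit
    omega
  · -- apex in the second part
    have hvA : ∀ j : Fin (2*k+3), (f (Sum.inr j)).val < m := by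
      intro j
      rcases hadj j with ⟨h1,_,_⟩|⟨h1,_⟩|⟨_,h2⟩
      · omega
      · omega
      · exact h2
    have hzadj : ∀ j1 j2 : Fin (2*k+3), j1.val + 1 = j2.val →
        Zadj K m (f (Sum.inr j1)).val (f (Sum.inr j2)).val := by
      intro j1 j2 h
      rcases hpath j1 j2 h with ⟨_,_,hz⟩|⟨_,h2⟩|⟨h1,_⟩
      · exact hz
      · have := hvA j2; omega
      · have := hvA j1; omega
    have h0lt : 0 < 2*k+3 := by omega
    have hblkconst : ∀ t (ht : t < 2*k+3),
        blk K m (f (Sum.inr ⟨t, ht⟩)).val = blk K m (f (Sum.inr ⟨0, h0lt⟩)).val := by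
      intro t
      induction t with
      | zero => intro ht; rfl
      | succ p ih =>
        intro ht
        have hp : p < 2*k+3 := by omega
        have hz := hzadj ⟨p, hp⟩ ⟨p+1, ht⟩ rfl
        rw [← hz.1]
        exact ih hp
    set b := blk K m (f (Sum.inr ⟨0, h0lt⟩)).val with hb
    have hsub : ∀ j : Fin (2*k+3),
        (f (Sum.inr j)).val ∈ Finset.Ico (Lb K * b) (Lb K * b + bsz K m b) := by
      intro j
      have h1 := decomp hm (hvA j)
      have h2 : blk K m (f (Sum.inr j)).val = b := by
        have := hblkconst j.val j.isLt
        simpa using this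
      unfold sz at h1
      rw [h2] at h1
      simp only [Finset.mem_Ico]
      omega
    have hcard : 2*k+3 ≤ bsz K m b := by
      have hle : (Finset.univ : Finset (Fin (2*k+3))).card
          ≤ (Finset.Ico (Lb K * b) (Lb K * b + bsz K m b)).card := by
        apply Finset.card_le_card_of_injOn (fun j => (f (Sum.inr j)).val)
          (fun j _ => hsub j)
        intro j1 _ j2 _ h
        exact hvinj j1 j2 h
      rw [Finset.card_univ, Fintype.card_fin, Nat.card_Ico] at hle
      omega
    have hub := bsz_le (K := K) (m := m) b
    have : (2:ℕ) * Lb K - 1 = 4*K+1 := by unfold Lb; omega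
    omega


section Counting

lemma card_lt_part {n m : ℕ} (hmn : m ≤ n) :
    (Finset.univ.filter (fun j : Fin n => j.val < m)).card = m := by
  rw [← Finset.card_range m]
  apply Finset.card_bij (fun j _ => j.val)
  · intro a ha
    simp only [Finset.mem_filter, Finset.mem_univ, true_and] at ha
    simpa using ha
  · intro a _ b _ h
    exact Fin.val_injective h
  · intro b hb
    simp only [Finset.mem_range] at hb
    exact ⟨⟨b, by omega⟩, by simpa using hb, rfl⟩

lemma card_ge_part {n m : ℕ} :
    (Finset.univ.filter (fun j : Fin n => m ≤ j.val)).card = n - m := by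
  rw [← Nat.card_Ico m n]
  apply Finset.card_bij (fun j _ => j.val)
  · intro a ha
    simp only [Finset.mem_filter, Finset.mem_univ, true_and] at ha
    simp only [Finset.mem_Ico]
    exact ⟨ha, a.isLt⟩
  · intro a _ b _ h
    exact Fin.val_injective h
  · intro b hb
    simp only [Finset.mem_Ico] at hb
    exact ⟨⟨b, hb.2⟩, by simpa using hb.1, rfl⟩

lemma card_Znbhd {n m K : ℕ} (hmn : m ≤ n) (hm : Lb K ≤ m) (hK : 1 ≤ K)
    {i : ℕ} (hi : i < m) :
    (Finset.univ.filter (fun j : Fin n => j.val < m ∧ Zadj K m i j.val)).card = 2*K := by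
  rw [← Z_degree (K := K) (m := m) hm hK hi]
  apply Finset.card_bij (fun j _ => j.val)
  · intro a ha
    simp only [Finset.mem_filter, Finset.mem_univ, true_and] at ha
    simp only [Finset.mem_filter, Finset.mem_range]
    exact ⟨ha.1, ha.2⟩
  · intro a _ b _ h
    exact Fin.val_injective h
  · intro b hb
    simp only [Finset.mem_filter, Finset.mem_range] at hb
    refine ⟨⟨b, by omega⟩, ?_, rfl⟩
    simp only [Finset.mem_filter, Finset.mem_univ, true_and]
    exact ⟨hb.1, hb.2⟩

end Counting

section Eigen

lemma Hg_hasEigenvalue (K n : ℕ) (hK : 1 ≤ K) (hm : Lb K ≤ n/2) (lam : ℝ)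
    (hlam : lam * lam = (2*(K:ℝ)) * lam + ((n/2 : ℕ) : ℝ) * ((n - n/2 : ℕ) : ℝ))
    (hlam0 : 0 < lam) :
    Module.End.HasEigenvalue (adjMat (Hg K n)).mulVecLin lam := by
  classical
  set m := n / 2 with hmdef
  have hmn : m ≤ n := Nat.div_le_self n 2
  have hm0 : 0 < m := lt_of_lt_of_le (by unfold Lb; omega) hm
  set x : Fin n → ℝ := fun i => if i.val < m then lam else (m : ℝ) with hx
  have key : (adjMat (Hg K n)).mulVec x = lam • x := by
    funext i
    have h1 : (adjMat (Hg K n)).mulVec x i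
        = ∑ j : Fin n, (if (Hg K n).Adj i j then (1:ℝ) else 0) * x j := by
      simp [adjMat, Matrix.mulVec, dotProduct, SimpleGraph.adjMatrix_apply]
    have h2 : ∀ j : Fin n, (if (Hg K n).Adj i j then (1:ℝ) else 0) * x j
        = (if ((Hg K n).Adj i j ∧ j.val < m) then lam else 0)
          + (if ((Hg K n).Adj i j ∧ ¬ j.val < m) then (m:ℝ) else 0) := by
      intro j
      by_cases ha : (Hg K n).Adj i j <;> by_cases hb : j.val < m <;>
        simp [hx, ha, hb]
    have hsumind : ∀ (P : Fin n → Prop) (inst : DecidablePred P) (c : ℝ),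
        (∑ j, if P j then c else 0) = ((Finset.univ.filter P).card : ℝ) * c := by
      intro P inst c
      rw [← Finset.sum_filter, Finset.sum_const, nsmul_eq_mul]
    rw [h1]
    simp only [h2]
    rw [Finset.sum_add_distrib, hsumind _ _ lam, hsumind _ _ ((m:ℕ):ℝ)]
    rcases lt_or_ge i.val m with hi | hi
    · have hf1 : Finset.univ.filter (fun j : Fin n => (Hg K n).Adj i j ∧ j.val < m)
          = Finset.univ.filter (fun j : Fin n => j.val < m ∧ Zadj K m i.val j.val) := by
        apply Finset.filter_congr
        intro j _
        rw [Hg_adj_iff]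
        constructor
        · rintro ⟨h, hjm⟩
          refine ⟨hjm, ?_⟩
          rcases h with ⟨_,_,hz⟩|⟨_,h2⟩|⟨h1,_⟩
          · exact hz
          · omega
          · omega
        · rintro ⟨hjm, hz⟩
          exact ⟨Or.inl ⟨hi, hjm, hz⟩, hjm⟩
      have hf2 : Finset.univ.filter (fun j : Fin n => (Hg K n).Adj i j ∧ ¬ j.val < m)
          = Finset.univ.filter (fun j : Fin n => m ≤ j.val) := by
        apply Finset.filter_congr
        intro j _
        rw [Hg_adj_iff]
        constructor
        · rintro ⟨_, hjm⟩; omega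
        · intro hjm
          exact ⟨Or.inr (Or.inl ⟨hi, hjm⟩), by omega⟩
      rw [hf1, hf2, card_Znbhd hmn hm hK hi, card_ge_part]
      have hxi : x i = lam := by simp [hx, hi]
      rw [Pi.smul_apply, smul_eq_mul, hxi]
      push_cast
      linarith [hlam]
    · have hf1 : Finset.univ.filter (fun j : Fin n => (Hg K n).Adj i j ∧ j.val < m)
          = Finset.univ.filter (fun j : Fin n => j.val < m) := by
        apply Finset.filter_congr
        intro j _
        rw [Hg_adj_iff]
        constructor
        · rintro ⟨_, hjm⟩; exact hjm
        · intro hjm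
          exact ⟨Or.inr (Or.inr ⟨hi, hjm⟩), hjm⟩
      have hf2 : Finset.univ.filter (fun j : Fin n => (Hg K n).Adj i j ∧ ¬ j.val < m)
          = (∅ : Finset (Fin n)) := by
        apply Finset.filter_false_of_mem
        intro j _
        rw [Hg_adj_iff]
        rintro ⟨h, hjm⟩
        rcases h with ⟨h1,_,_⟩|⟨h1,_⟩|⟨_,h2⟩ <;> omega
      rw [hf1, hf2, card_lt_part hmn, Finset.card_empty]
      have hxi : x i = (m:ℝ) := by simp [hx, not_lt.mpr hi]
      rw [Pi.smul_apply, smul_eq_mul, hxi]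
      ring
  apply Module.End.hasEigenvalue_of_hasEigenvector (x := x)
  constructor
  · rw [Module.End.mem_eigenspace_iff, Matrix.mulVecLin_apply, key]
  · intro h0
    have h1 : x ⟨0, by omega⟩ = 0 := congrFun h0 _
    simp only [hx] at h1
    rw [if_pos (by simpa using hm0)] at h1
    exact absurd h1 (ne_of_gt hlam0)

lemma eig_bddAbove {n : ℕ} (G : SimpleGraph (Fin n)) :
    BddAbove {μ : ℝ | Module.End.HasEigenvalue (adjMat G).mulVecLin μ} := by
  classical
  refine ⟨n, fun μ hμ => ?_⟩
  obtain ⟨v, hv⟩ := hμ.exists_hasEigenvector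
  have hveq : (adjMat G).mulVec v = μ • v := by
    have h := hv.apply_eq_smul
    rwa [Matrix.mulVecLin_apply] at h
  have hv0 := hv.right
  rcases Nat.eq_zero_or_pos n with hn0 | hn0
  · exfalso
    apply hv0
    funext i
    exact absurd i.isLt (by omega)
  · have : Nonempty (Fin n) := ⟨⟨0, hn0⟩⟩
    obtain ⟨i₀, -, hmax⟩ := Finset.exists_max_image Finset.univ (fun i => |v i|)
      Finset.univ_nonempty
    have hmax' : ∀ j, |v j| ≤ |v i₀| := fun j => hmax j (Finset.mem_univ j)
    have hpos : 0 < |v i₀| := by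
      by_contra hc
      apply hv0
      funext j
      have := hmax' j
      have := abs_nonneg (v j)
      have h0 : |v j| = 0 := by
        have := abs_nonneg (v i₀)
        nlinarith [hmax' j]
      exact abs_eq_zero.mp h0
    have hi : μ * v i₀ = ∑ j, adjMat G i₀ j * v j := by
      have := congrFun hveq i₀
      rw [Pi.smul_apply, smul_eq_mul] at this
      rw [← this]
      simp [Matrix.mulVec, dotProduct]
    have habs : |μ| * |v i₀| ≤ (n:ℝ) * |v i₀| := by
      rw [← abs_mul, hi]
      calc |∑ j, adjMat G i₀ j * v j| ≤ ∑ j, |adjMat G i₀ j * v j| :=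
            Finset.abs_sum_le_sum_abs _ _
        _ ≤ ∑ _j : Fin n, |v i₀| := by
            apply Finset.sum_le_sum
            intro j _
            rw [abs_mul]
            have hA : |adjMat G i₀ j| ≤ 1 := by
              simp only [adjMat, SimpleGraph.adjMatrix_apply]
              split <;> simp
            calc |adjMat G i₀ j| * |v j| ≤ 1 * |v i₀| :=
                  mul_le_mul hA (hmax' j) (abs_nonneg _) zero_le_one
              _ = |v i₀| := one_mul _
        _ = (n:ℝ) * |v i₀| := by
            rw [Finset.sum_const, Finset.card_univ, Fintype.card_fin, nsmul_eq_mul]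
    have hμn : |μ| ≤ (n:ℝ) := le_of_mul_le_mul_right habs hpos
    exact le_trans (le_abs_self μ) hμn

end Eigen

end SpexAux

/-- lower bounds on the spectral radius of graphs in `SPEX(n, H_{2k+3})`
for even `k ≥ 2` and `n ≥ 6k`, according to the parity of `n`. -/
theorem spex_spectral_lower_bound_even_k (k n : ℕ) (hke : Even k) (hk : 2 ≤ k)
    (hn : 6 * k ≤ n) :
    ∀ G ∈ SPEX n (fan (2 * k + 3)),
      (Even n →
        ((k : ℝ) + Real.sqrt ((k : ℝ) ^ 2 + (n : ℝ) ^ 2)) / 2 ≤ specRad G) ∧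
      (Odd n →
        ((k : ℝ) + Real.sqrt ((k : ℝ) ^ 2 + (n : ℝ) ^ 2 - 1)) / 2 ≤ specRad G) := by
  intro G hG
  obtain ⟨hfree, hmax⟩ := hG
  obtain ⟨K, hkK⟩ := hke
  have hk2K : k = 2*K := by omega
  have hK1 : 1 ≤ K := by omega
  have hm : SpexAux.Lb K ≤ n / 2 := by unfold SpexAux.Lb; omega
  set P : ℝ := ((n/2 : ℕ) : ℝ) * ((n - n/2 : ℕ) : ℝ) with hP
  have hPn : 0 ≤ P := by positivity
  set lam : ℝ := ((k:ℝ) + Real.sqrt ((k:ℝ)^2 + 4*P))/2 with hlamdef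
  have hsq : Real.sqrt ((k:ℝ)^2 + 4*P) ^ 2 = (k:ℝ)^2 + 4*P :=
    Real.sq_sqrt (by positivity)
  have hks : (k:ℝ) = 2*(K:ℝ) := by rw [hk2K]; push_cast; ring
  have hlam : lam * lam = (2*(K:ℝ)) * lam + ((n/2 : ℕ) : ℝ) * ((n - n/2 : ℕ) : ℝ) := by
    rw [← hP, ← hks, hlamdef]
    linear_combination hsq / 4
  have hlam0 : 0 < lam := by
    have hk0 : (0:ℝ) < (k:ℝ) := by exact_mod_cast (by omega : 0 < k)
    rw [hlamdef]
    nlinarith [Real.sqrt_nonneg ((k:ℝ)^2 + 4*P)]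
  have heig := SpexAux.Hg_hasEigenvalue K n hK1 hm lam hlam hlam0
  have hfan := SpexAux.Hg_fanfree K n k hK1 hk2K hm
  have hle1 : lam ≤ specRad (SpexAux.Hg K n) := le_csSup (SpexAux.eig_bddAbove _) heig
  have hle2 := hmax (SpexAux.Hg K n) hfan
  have key : lam ≤ specRad G := le_trans hle1 hle2
  constructor
  · intro hev
    obtain ⟨t, ht⟩ := hev
    have h1 : (n/2 : ℕ) = t := by omega
    have h2 : (n - n/2 : ℕ) = t := by omega
    have harg : (k:ℝ)^2 + (n:ℝ)^2 = (k:ℝ)^2 + 4*P := by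
      rw [hP, h2, h1]
      have hnr : (n:ℝ) = 2*(t:ℝ) := by rw [ht]; push_cast; ring
      rw [hnr]; ring
    calc ((k:ℝ) + Real.sqrt ((k:ℝ)^2+(n:ℝ)^2))/2 = lam := by rw [harg, hlamdef]
      _ ≤ specRad G := key
  · intro hodd
    obtain ⟨t, ht⟩ := hodd
    have h1 : (n/2 : ℕ) = t := by omega
    have h2 : (n - n/2 : ℕ) = t+1 := by omega
    have harg : (k:ℝ)^2 + (n:ℝ)^2 - 1 = (k:ℝ)^2 + 4*P := by
      rw [hP, h2, h1]
      have hnr : (n:ℝ) = 2*(t:ℝ)+1 := by rw [ht]; push_cast; ring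
      rw [hnr]; push_cast; ring
    calc ((k:ℝ) + Real.sqrt ((k:ℝ)^2+(n:ℝ)^2-1))/2 = lam := by rw [harg, hlamdef]
      _ ≤ specRad G := key
end

section
/- Let k ≥ 1 be an integer and let G be a finite simple graph. The join G ∨ ¬K_{2k+3} of G with the empty graph on 2k+3 vertices is H_{2k+3}-free if and only if the maximum degree of G is at most k and G is P_{2k+3}-free. -/
open SimpleGraph

/-- `G ∨ ¬K_{2k+3}` is `H_{2k+3}`-free if and only if `Δ(G) ≤ k` and `G`
is `P_{2k+3}`-free. -/
theorem join_empty_fan_free_iff (k : ℕ) (hk : 1 ≤ k)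
    (V : Type) [Fintype V] (G : SimpleGraph V) :
    ¬ ContainsCopy (fan (2 * k + 3))
        (graphJoin G (⊥ : SimpleGraph (Fin (2 * k + 3)))) ↔
      (∀ v, gdeg G v ≤ k) ∧ ¬ ContainsCopy (pathGraph (2 * k + 3)) G := by
  classical
  constructor
  · intro hfree
    refine ⟨?_, ?_⟩
    · -- max degree ≤ k
      intro a
      by_contra hdeg
      push_neg at hdeg
      have hfin : (G.neighborSet a).Finite := Set.toFinite _
      have hcard : k + 1 ≤ hfin.toFinset.card := by
        rw [← Set.ncard_eq_toFinset_card _ hfin]; exact hdeg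
      obtain ⟨t, hts, htc⟩ := Finset.exists_subset_card_eq hcard
      let e := t.equivFin
      let v : Fin (k + 1) → V := fun i => (e.symm (Fin.cast htc.symm i) : V)
      have hvinj : Function.Injective v := by
        intro i j hij
        have : e.symm (Fin.cast htc.symm i) = e.symm (Fin.cast htc.symm j) :=
          Subtype.ext hij
        have := e.symm.injective this
        simpa [Fin.ext_iff] using congrArg Fin.val this
      have hadj : ∀ i, G.Adj a (v i) := by
        intro i
        have hm : v i ∈ t := (e.symm (Fin.cast htc.symm i)).2
        have := hts hm
        rwa [Set.Finite.mem_toFinset] at this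
      have hvne : ∀ i, a ≠ v i := fun i => (hadj i).ne
      apply hfree
      refine ⟨⟨Sum.elim (fun _ => Sum.inl a)
        (fun i : Fin (2 * k + 3) =>
          if h : i.val % 2 = 0 then
            Sum.inr (⟨i.val / 2, by have := i.isLt; omega⟩ : Fin (2 * k + 3))
          else Sum.inl (v ⟨i.val / 2, by have := i.isLt; omega⟩)), ?_⟩, ?_⟩
      · rintro (x | x) (y | y) hxy
        · exact congrArg Sum.inl (Subsingleton.elim x y)
        · simp only [Sum.elim_inl, Sum.elim_inr] at hxy
          split_ifs at hxy
          all_goals first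
            | exact Sum.noConfusion hxy
            | exact absurd (Sum.inl.inj hxy) (hvne _)
        · simp only [Sum.elim_inl, Sum.elim_inr] at hxy
          split_ifs at hxy
          all_goals first
            | exact Sum.noConfusion hxy
            | exact absurd (Sum.inl.inj hxy).symm (hvne _)
        · simp only [Sum.elim_inr] at hxy
          split_ifs at hxy
          all_goals first
            | exact Sum.noConfusion hxy
            | (have h3 : x.val / 2 = y.val / 2 :=
                 congrArg Fin.val (Sum.inr.inj hxy)
               exact congrArg Sum.inr (Fin.ext (by omega)))
            | (have h3 := hvinj (Sum.inl.inj hxy)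
               have h4 : x.val / 2 = y.val / 2 := by
                 simpa [Fin.ext_iff] using h3
               exact congrArg Sum.inr (Fin.ext (by omega)))
      · rintro (x | x) (y | y) h
        · exact absurd (congrArg Sum.inl (Subsingleton.elim x y)) h.ne
        · show (graphJoin G (⊥ : SimpleGraph (Fin (2 * k + 3)))).Adj (Sum.inl a) (if h : y.val % 2 = 0 then Sum.inr (⟨y.val / 2, by have := y.isLt; omega⟩ : Fin (2 * k + 3)) else Sum.inl (v ⟨y.val / 2, by have := y.isLt; omega⟩))
          split_ifs with hy
          · exact trivial
          · exact hadj _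
        · show (graphJoin G (⊥ : SimpleGraph (Fin (2 * k + 3)))).Adj (if h : x.val % 2 = 0 then Sum.inr (⟨x.val / 2, by have := x.isLt; omega⟩ : Fin (2 * k + 3)) else Sum.inl (v ⟨x.val / 2, by have := x.isLt; omega⟩)) (Sum.inl a)
          split_ifs with hx
          · exact trivial
          · exact (hadj _).symm
        · have h' : (pathGraph (2 * k + 3)).Adj x y := h
          rw [pathGraph_adj] at h'
          show (graphJoin G (⊥ : SimpleGraph (Fin (2 * k + 3)))).Adj (if h : x.val % 2 = 0 then Sum.inr (⟨x.val / 2, by have := x.isLt; omega⟩ : Fin (2 * k + 3)) else Sum.inl (v ⟨x.val / 2, by have := x.isLt; omega⟩)) (if h : y.val % 2 = 0 then Sum.inr (⟨y.val / 2, by have := y.isLt; omega⟩ : Fin (2 * k + 3)) else Sum.inl (v ⟨y.val / 2, by have := y.isLt; omega⟩))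
          by_cases hx : x.val % 2 = 0 <;> by_cases hy : y.val % 2 = 0
          · exact absurd h' (by omega)
          · rw [dif_pos hx, dif_neg hy]; exact trivial
          · rw [dif_neg hx, dif_pos hy]; exact trivial
          · exact absurd h' (by omega)
    · -- path-free
      rintro ⟨g, hg⟩
      apply hfree
      refine ⟨⟨Sum.elim (fun _ => Sum.inr (0 : Fin (2 * k + 3)))
        (fun i => Sum.inl (g i)), ?_⟩, ?_⟩
      · rintro (x | x) (y | y) hxy
        · exact congrArg Sum.inl (Subsingleton.elim x y)
        · simp at hxy
        · simp at hxy
        · simp only [Sum.elim_inr, Sum.inl.injEq] at hxy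
          exact congrArg Sum.inr (g.injective hxy)
      · rintro (x | x) (y | y) h
        · exact absurd (congrArg Sum.inl (Subsingleton.elim x y)) h.ne
        · exact trivial
        · exact trivial
        · exact hg x y h
  · rintro ⟨hdeg, hpath⟩ ⟨f, hf⟩
    have hub : ∀ i : Fin (2 * k + 3),
        (graphJoin G (⊥ : SimpleGraph (Fin (2 * k + 3)))).Adj
          (f (Sum.inl 0)) (f (Sum.inr i)) := fun i => hf _ _ trivial
    cases h0 : f (Sum.inl 0) with
    | inr b =>
      have key : ∀ i, ∃ w, f (Sum.inr i) = Sum.inl w := by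
        intro i
        cases h1 : f (Sum.inr i) with
        | inl w => exact ⟨w, rfl⟩
        | inr c =>
          have h2 := hub i
          rw [h0, h1] at h2
          have h3 : (⊥ : SimpleGraph (Fin (2 * k + 3))).Adj b c := h2
          simp at h3
      choose g hg using key
      apply hpath
      refine ⟨⟨g, ?_⟩, ?_⟩
      · intro i j hij
        have : f (Sum.inr i) = f (Sum.inr j) := by rw [hg, hg, hij]
        simpa using f.injective this
      · intro i j hij
        have h2 := hf (Sum.inr i) (Sum.inr j) hij
        rw [hg, hg] at h2
        exact h2
    | inl a =>
      have hwadj : ∀ i w, f (Sum.inr i) = Sum.inl w → G.Adj a w := by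
        intro i w hw
        have h2 := hub i
        rw [h0, hw] at h2
        exact h2
      set S : Finset (Fin (2 * k + 3)) :=
        Finset.univ.filter (fun i => (f (Sum.inr i)).isRight) with hS
      have hnc : ∀ i j : Fin (2 * k + 3), i ∈ S → j ∈ S → i.val + 1 ≠ j.val := by
        intro i j hi hj hij
        simp only [hS, Finset.mem_filter, Finset.mem_univ, true_and,
          Sum.isRight_iff] at hi hj
        obtain ⟨c, hc⟩ := hi
        obtain ⟨d, hd⟩ := hj
        have hadj : (fan (2 * k + 3)).Adj (Sum.inr i) (Sum.inr j) := by
          show (pathGraph (2 * k + 3)).Adj i j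
          rw [pathGraph_adj]; left; exact hij
        have h2 := hf _ _ hadj
        rw [hc, hd] at h2
        have h3 : (⊥ : SimpleGraph (Fin (2 * k + 3))).Adj c d := h2
        simp at h3
      have hScard : S.card ≤ k + 2 := by
        have hinj : Set.InjOn
            (fun i : Fin (2 * k + 3) =>
              (⟨i.val / 2, by have := i.isLt; omega⟩ : Fin (k + 2))) ↑S := by
          intro i hi j hj hij
          simp only [Fin.mk.injEq] at hij
          by_contra hne
          have hne' : i.val ≠ j.val := fun h => hne (Fin.ext h)
          have : i.val + 1 = j.val ∨ j.val + 1 = i.val := by omega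
          cases this with
          | inl h => exact hnc i j hi hj h
          | inr h => exact hnc j i hj hi h
        have := Finset.card_le_card_of_injOn _ (fun i _ => Finset.mem_univ _) hinj
        simpa using this
      have hcompl : k + 1 ≤ Sᶜ.card := by
        have h1 := Finset.card_compl S
        have h2 : Fintype.card (Fin (2 * k + 3)) = 2 * k + 3 := by simp
        have h3 := S.card_le_univ
        omega
      have key : ∀ i ∈ Sᶜ, ∃ w, f (Sum.inr i) = Sum.inl w := by
        intro i hi
        simp only [Finset.mem_compl, hS, Finset.mem_filter, Finset.mem_univ,
          true_and] at hi
        cases h1 : f (Sum.inr i) with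
        | inl w => exact ⟨w, rfl⟩
        | inr c => rw [h1] at hi; simp at hi
      set w : Fin (2 * k + 3) → V :=
        fun i => Sum.elim id (fun _ => a) (f (Sum.inr i)) with hwdef
      have hw : ∀ i ∈ Sᶜ, f (Sum.inr i) = Sum.inl (w i) := by
        intro i hi
        obtain ⟨x, hx⟩ := key i hi
        rw [hx]
        simp [hwdef, hx]
      have hwinj : Set.InjOn w ↑(Sᶜ) := by
        intro i hi j hj hij
        have : f (Sum.inr i) = f (Sum.inr j) := by
          rw [hw i hi, hw j hj, hij]
        simpa using f.injective this
      have hsub : ∀ i ∈ Sᶜ, w i ∈ G.neighborSet a :=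
        fun i hi => hwadj i (w i) (hw i hi)
      have hfin : (G.neighborSet a).Finite := Set.toFinite _
      have hle : Sᶜ.card ≤ gdeg G a := by
        have himg := Finset.card_image_of_injOn hwinj
        have hsub2 : (Sᶜ.image w : Finset V) ⊆ hfin.toFinset := by
          intro x hx
          simp only [Finset.mem_image] at hx
          obtain ⟨i, hi, rfl⟩ := hx
          rw [Set.Finite.mem_toFinset]
          exact hsub i hi
        calc Sᶜ.card = (Sᶜ.image w).card := himg.symm
          _ ≤ hfin.toFinset.card := Finset.card_le_card hsub2
          _ = gdeg G a := (Set.ncard_eq_toFinset_card _ hfin).symm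
      have := hdeg a
      omega
end
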